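/- arXiv:0706.3644 — 7 statements merged into one kernel-verified Lean document; each statement's English description precedes it below -/
import Mathlib

section
/- Let (X,d) be a metric space and f : [a,b] → X an injective Lipschitz curve with image A = f([a,b]). Then the one-dimensional Hausdorff measure of A satisfies H¹(A) = Var(f). -/
open MeasureTheory Set

open scoped ENNReal NNReal Topology

/-- Covering an interval by the pieces of a partition. -/
lemma aux_cover_Icc (u : ℕ → ℝ) (hu : Monotone u) (m : ℕ) :
    Icc (u 0) (u (m + 1)) ⊆ ⋃ i : Fin (m + 1), Icc (u i) (u (i + 1)) := by
  induction m with
  | zero =>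
    intro x hx
    exact mem_iUnion.2 ⟨0, by simpa using hx⟩
  | succ m ih =>
    intro x hx
    rcases le_total x (u (m + 1)) with h | h
    · obtain ⟨i, hi⟩ := mem_iUnion.1 (ih ⟨hx.1, h⟩)
      exact mem_iUnion.2 ⟨i.castSucc, by simpa using hi⟩
    · exact mem_iUnion.2 ⟨Fin.last (m + 1), by simpa using ⟨h, hx.2⟩⟩

/-- Additivity of variation over a partition. -/
lemma aux_sum_var {X : Type*} [PseudoEMetricSpace X] (f : ℝ → X) (u : ℕ → ℝ)
    (hu : Monotone u) (m : ℕ) :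
    ∑ i ∈ Finset.range m, eVariationOn f (Icc (u i) (u (i + 1)))
      = eVariationOn f (Icc (u 0) (u m)) := by
  induction m with
  | zero =>
    simp [eVariationOn.subsingleton f (by simp [Icc_self] : (Icc (u 0) (u 0)).Subsingleton)]
  | succ m ih =>
    rw [Finset.sum_range_succ, ih]
    have := eVariationOn.Icc_add_Icc f (s := (univ : Set ℝ)) (hu (Nat.zero_le m))
      (hu (Nat.le_succ m)) (mem_univ (u m))
    simpa using this

/-- For an injective Lipschitz curve `f : [a,b] → X` with image `A = f([a,b])`,
the one-dimensional Hausdorff measure of `A` satisfies `H¹(A) = Var(f)`. -/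
theorem hausdorff_measure_eq_variation_of_injective {X : Type*} [MetricSpace X]
    [MeasurableSpace X] [BorelSpace X]
    (a b : ℝ) (hab : a ≤ b) (f : ℝ → X) (K : NNReal)
    (hf : LipschitzOnWith K f (Set.Icc a b))
    (hinj : Set.InjOn f (Set.Icc a b)) :
    μH[1] (f '' Set.Icc a b) = eVariationOn f (Set.Icc a b) := by
  haveI : NoAtoms (μH[1] : Measure X) := MeasureTheory.Measure.noAtoms_hausdorff X one_pos
  -- Key: the Hausdorff measure of the image of a subinterval dominates the endpoint distance.
  have key : ∀ s t : ℝ, s ∈ Icc a b → t ∈ Icc a b → s ≤ t →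
      edist (f s) (f t) ≤ μH[1] (f '' Icc s t) := by
    intro s t hs ht hst
    have hcont : ContinuousOn f (Icc s t) := hf.continuousOn.mono (Icc_subset_Icc hs.1 ht.2)
    set g : X → ℝ := fun x => dist (f s) x with hg
    have hgl : LipschitzWith 1 g := LipschitzWith.dist_right (f s)
    have hsub : Icc (0 : ℝ) (dist (f s) (f t)) ⊆ (g ∘ f) '' Icc s t := by
      have h0 : g (f s) = 0 := dist_self _
      have := intermediate_value_Icc hst (hgl.continuous.comp_continuousOn hcont)
      simpa [g, h0] using this
    calc edist (f s) (f t) = ENNReal.ofReal (dist (f s) (f t)) := edist_dist _ _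
      _ = μH[1] (Icc (0 : ℝ) (dist (f s) (f t))) := by
          rw [MeasureTheory.hausdorffMeasure_real, Real.volume_Icc, sub_zero]
      _ ≤ μH[1] ((g ∘ f) '' Icc s t) := measure_mono hsub
      _ = μH[1] (g '' (f '' Icc s t)) := by rw [image_comp]
      _ ≤ ((1 : ℝ≥0) : ℝ≥0∞) ^ (1 : ℝ) * μH[1] (f '' Icc s t) :=
          hgl.hausdorffMeasure_image_le zero_le_one _
      _ = μH[1] (f '' Icc s t) := by simp
  apply le_antisymm
  · -- upper bound : μH ≤ variation
    set c : ℕ → ℝ := fun n => (b - a) / (n + 1) with hc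
    have hc0 : ∀ n, 0 ≤ c n := fun n =>
      div_nonneg (sub_nonneg.2 hab) (by positivity)
    set v : ℕ → ℕ → ℝ := fun n i => a + i * c n with hv
    have hvmono : ∀ n, Monotone (v n) := by
      intro n i j hij
      have : (i : ℝ) ≤ j := by exact_mod_cast hij
      simp only [hv]
      nlinarith [hc0 n]
    have hv0 : ∀ n, v n 0 = a := by intro n; simp [hv]
    have hvlast : ∀ n, v n (n + 1) = b := by
      intro n
      have hn : ((n : ℝ) + 1) ≠ 0 := by positivity
      simp only [hv, hc]; push_cast
      rw [mul_div_assoc', mul_div_cancel_left₀ _ hn]; ring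
    have hvmem : ∀ n i, i ≤ n + 1 → v n i ∈ Icc a b := by
      intro n i hi
      constructor
      · rw [← hv0 n]; exact hvmono n (Nat.zero_le i)
      · rw [← hvlast n]; exact hvmono n hi
    have main := MeasureTheory.Measure.hausdorffMeasure_le_liminf_sum (X := X) 1 (f '' Icc a b)
      (l := Filter.atTop) (fun n => (K : ℝ≥0∞) * ENNReal.ofReal (c n))
      ?_ (fun n i => f '' Icc (v n (i : Fin (n+1)).val) (v n ((i : Fin (n+1)).val + 1)))
      ?_ ?_
    · refine main.trans ?_
      refine (Filter.liminf_le_liminf (Filter.Eventually.of_forall fun n => ?_)).trans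
        (by rw [Filter.liminf_const])
      calc (∑ i : Fin (n + 1),
              EMetric.diam (f '' Icc (v n i.val) (v n (i.val + 1))) ^ (1 : ℝ))
          = ∑ i ∈ Finset.range (n + 1),
              EMetric.diam (f '' Icc (v n i) (v n (i + 1))) := by
            rw [Fin.sum_univ_eq_sum_range (fun i =>
              EMetric.diam (f '' Icc (v n i) (v n (i + 1))) ^ (1 : ℝ))]
            simp [ENNReal.rpow_one]
        _ ≤ ∑ i ∈ Finset.range (n + 1), eVariationOn f (Icc (v n i) (v n (i + 1))) := by
            refine Finset.sum_le_sum fun i _ => ?_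
            refine EMetric.diam_le ?_
            rintro x ⟨p, hp, rfl⟩ y ⟨q, hq, rfl⟩
            exact eVariationOn.edist_le f hp hq
        _ = eVariationOn f (Icc (v n 0) (v n (n + 1))) := aux_sum_var f (v n) (hvmono n) (n + 1)
        _ = eVariationOn f (Icc a b) := by rw [hv0, hvlast]
    · -- mesh tends to 0
      have h1 : Filter.Tendsto (fun n : ℕ => c n) Filter.atTop (𝓝 0) := by
        have := tendsto_one_div_add_atTop_nhds_zero_nat (𝕜 := ℝ)
        have h2 : Filter.Tendsto (fun n : ℕ => (b - a) * (1 / ((n : ℝ) + 1)))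
            Filter.atTop (𝓝 ((b - a) * 0)) := this.const_mul (b - a)
        simpa [hc, div_eq_mul_inv, mul_comm] using h2
      have h3 : Filter.Tendsto (fun n : ℕ => ENNReal.ofReal (c n)) Filter.atTop (𝓝 0) := by
        simpa using (ENNReal.tendsto_ofReal h1)
      simpa using ENNReal.Tendsto.const_mul h3 (Or.inr ENNReal.coe_ne_top)
    · -- diameter bound
      refine Filter.Eventually.of_forall fun n i => ?_
      refine EMetric.diam_le ?_
      rintro x ⟨p, hp, rfl⟩ y ⟨q, hq, rfl⟩
      have hpi : p ∈ Icc a b := by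
        refine Icc_subset_Icc ?_ ?_ hp
        · exact (hvmem n i.val (le_of_lt (by omega : i.val < n + 1))).1
        · exact (hvmem n (i.val + 1) (by omega)).2
      have hqi : q ∈ Icc a b := by
        refine Icc_subset_Icc ?_ ?_ hq
        · exact (hvmem n i.val (le_of_lt (by omega : i.val < n + 1))).1
        · exact (hvmem n (i.val + 1) (by omega)).2
      refine (hf hpi hqi).trans (mul_le_mul_right ?_ _)
      have : dist p q ≤ v n (i.val + 1) - v n i.val := Real.dist_le_of_mem_Icc hp hq
      have hlen : v n (i.val + 1) - v n i.val = c n := by simp [hv]; ring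
      rw [edist_dist]
      exact ENNReal.ofReal_le_ofReal (by rw [← hlen]; exact this)
    · -- covering
      refine Filter.Eventually.of_forall fun n => ?_
      rw [← image_iUnion]
      refine image_mono ?_
      have := aux_cover_Icc (v n) (hvmono n) n
      rwa [hv0, hvlast] at this
  · -- lower bound : variation ≤ μH
    refine iSup_le ?_
    rintro ⟨n, u, hu, us⟩
    dsimp only
    set S : ℕ → Set X := fun i => f '' Ico (u i) (u (i + 1)) with hS
    have hSsub : ∀ i, Ico (u i) (u (i + 1)) ⊆ Icc a b := fun i =>
      (Ico_subset_Icc_self).trans (Icc_subset_Icc (us i).1 (us (i + 1)).2)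
    have hSeq : ∀ i, S i = f '' Icc (u i) (u (i + 1)) \ {f (u (i + 1))} := by
      intro i
      have h1 : Ico (u i) (u (i + 1)) = Icc (u i) (u (i + 1)) \ {u (i + 1)} :=
        by ext x; simp [and_assoc, lt_iff_le_and_ne]
      have hIccsub : Icc (u i) (u (i + 1)) ⊆ Icc a b :=
        Icc_subset_Icc (us i).1 (us (i + 1)).2
      have h2 := (hinj.mono hIccsub).image_diff_subset
        (singleton_subset_iff.2 (right_mem_Icc.2 (hu (Nat.le_succ i))))
      rw [hS]
      simp only [h1, h2, image_singleton]
    have hScompact : ∀ i, IsCompact (f '' Icc (u i) (u (i + 1))) := by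
      intro i
      exact isCompact_Icc.image_of_continuousOn
        (hf.continuousOn.mono (Icc_subset_Icc (us i).1 (us (i + 1)).2))
    have hSmeas : ∀ i, MeasurableSet (S i) := by
      intro i
      rw [hSeq i]
      exact ((hScompact i).isClosed.measurableSet).diff (measurableSet_singleton _)
    have hSdisj : Pairwise (Function.onFun Disjoint fun i : Fin n => S i.val) := by
      have base : ∀ i j : Fin n, i < j → Disjoint (S i.val) (S j.val) := by
        intro i j h
        have hle : u (i.val + 1) ≤ u j.val := hu (by omega)
        have hdisj : Disjoint (Ico (u i.val) (u (i.val + 1))) (Ico (u j.val) (u (j.val + 1))) := by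
          refine Set.disjoint_left.2 fun x hx hx' => absurd hx'.1 (not_le.2 ?_)
          exact lt_of_lt_of_le hx.2 hle
        exact hdisj.image hinj (hSsub i.val) (hSsub j.val)
      intro i j hij
      rcases lt_or_gt_of_ne hij with h | h
      · exact base i j h
      · exact (base j i h).symm
    calc ∑ i ∈ Finset.range n, edist (f (u (i + 1))) (f (u i))
        ≤ ∑ i ∈ Finset.range n, μH[1] (S i) := by
          refine Finset.sum_le_sum fun i _ => ?_
          rw [edist_comm]
          refine (key (u i) (u (i + 1)) (us i) (us (i + 1)) (hu (Nat.le_succ i))).trans ?_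
          have hsplit : Icc (u i) (u (i + 1)) = Ico (u i) (u (i + 1)) ∪ {u (i + 1)} :=
            (Ico_union_right (hu (Nat.le_succ i))).symm
          calc μH[1] (f '' Icc (u i) (u (i + 1)))
              = μH[1] (S i ∪ f '' {u (i + 1)}) := by rw [hsplit, image_union]
            _ ≤ μH[1] (S i) + μH[1] (f '' {u (i + 1)}) := measure_union_le _ _
            _ = μH[1] (S i) := by rw [image_singleton, NullSingletonClass.measure_singleton (self := this), add_zero]
      _ = ∑ i : Fin n, μH[1] (S i.val) := (Fin.sum_univ_eq_sum_range (fun i => μH[1] (S i)) n).symm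
      _ = μH[1] (⋃ i : Fin n, S i.val) := by
          rw [measure_iUnion hSdisj (fun i => hSmeas i.val), tsum_fintype]
      _ ≤ μH[1] (f '' Icc a b) := by
          refine measure_mono (iUnion_subset fun i => ?_)
          exact image_mono (hSsub i.val)
end

section
/- (Reparametrisation Theorem) Let (X,d) be a metric space and let A ⊂ X be a path admitting a Lipschitz parametrisation, i.e. A = g([c,d]) for some Lipschitz curve g : [c,d] → X. Then A admits a reparametrisation f : [a,b] → X with f([a,b]) = A such that the upper dilatation satisfies Lip(f)(t) = 1 for almost every t ∈ [a,b] (with respect to Lebesgue measure). -/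
open MeasureTheory Filter Set

/-- The (pointwise) upper dilatation of `f` at `t`, relative to the domain `s ⊆ ℝ`:
`Lip(f)(t) = limsup_{ε→0+} sup { d(f v, f w)/|v-w| : v ≠ w, v,w ∈ s ∩ (t-ε,t+ε) }`,
valued in `ℝ≥0∞`. -/
noncomputable def upperDilatation {X : Type*} [PseudoMetricSpace X]
    (f : ℝ → X) (s : Set ℝ) (t : ℝ) : ENNReal :=
  Filter.limsup
    (fun ε : ℝ =>
      ⨆ (v : ℝ) (_ : v ∈ s ∩ Set.Ioo (t - ε) (t + ε))
        (w : ℝ) (_ : w ∈ s ∩ Set.Ioo (t - ε) (t + ε)) (_ : v ≠ w),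
          edist (f v) (f w) / ENNReal.ofReal |v - w|)
    (nhdsWithin (0 : ℝ) (Set.Ioi 0))

/-- The variation of `id` on a subset of `[x,y]` is at most `y - x`. -/
lemma evar_id_le {s : Set ℝ} {x y : ℝ} (h : s ⊆ Set.Icc x y) :
    eVariationOn id s ≤ ENNReal.ofReal (y - x) := by
  apply iSup_le
  rintro ⟨n, ⟨u, hu, us⟩⟩
  have key : ∀ m : ℕ, ∑ i ∈ Finset.range m, edist (id (u (i + 1))) (id (u i))
      = ENNReal.ofReal (u m - u 0) := by
    intro m
    induction m with
    | zero => simp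
    | succ m ih =>
        rw [Finset.sum_range_succ, ih]
        have h1 : (0:ℝ) ≤ u m - u 0 := sub_nonneg.2 (hu (Nat.zero_le m))
        have h2 : (0:ℝ) ≤ u (m+1) - u m := sub_nonneg.2 (hu (Nat.le_succ m))
        have : edist (id (u (m+1))) (id (u m)) = ENNReal.ofReal (u (m+1) - u m) := by
          simp only [id_eq]
          rw [edist_dist, Real.dist_eq, abs_of_nonneg h2]
        rw [this, ← ENNReal.ofReal_add h1 h2]
        ring_nf
  rw [key n]
  exact ENNReal.ofReal_le_ofReal (sub_le_sub (h (us n)).2 (h (us 0)).1)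

/-- Variation bound for a Lipschitz function on an interval piece. -/
lemma lipschitzOnWith_eVariationOn_le {X : Type*} [PseudoEMetricSpace X]
    {f : ℝ → X} {C : NNReal} {s : Set ℝ} (hf : LipschitzOnWith C f s) {t : Set ℝ}
    (hts : t ⊆ s) {x y : ℝ} (ht : t ⊆ Set.Icc x y) :
    eVariationOn f t ≤ C * ENNReal.ofReal (y - x) := by
  have : eVariationOn (f ∘ id) t ≤ C * eVariationOn id t :=
    hf.comp_eVariationOn_le hts
  calc eVariationOn f t = eVariationOn (f ∘ id) t := rfl
    _ ≤ C * eVariationOn id t := this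
    _ ≤ C * ENNReal.ofReal (y - x) := mul_le_mul_right (evar_id_le ht) _

/-- Reparametrisation Theorem: any path `A ⊆ X` admitting a Lipschitz parametrisation
admits a (Lipschitz) reparametrisation `f : [a,b] → A` with `Lip(f)(t) = 1` for almost
every `t ∈ [a,b]`. -/
theorem reparametrisation {X : Type*} [MetricSpace X]
    (c d : ℝ) (hcd : c ≤ d) (g : ℝ → X) (K : NNReal)
    (hg : LipschitzOnWith K g (Set.Icc c d)) (A : Set X) (hA : A = g '' Set.Icc c d) :
    ∃ (a b : ℝ), a ≤ b ∧ ∃ (f : ℝ → X) (K' : NNReal),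
      LipschitzOnWith K' f (Set.Icc a b) ∧
      f '' Set.Icc a b = A ∧
      ∀ᵐ t ∂(volume.restrict (Set.Icc a b)),
        upperDilatation f (Set.Icc a b) t = 1 := by
  classical
  set s : Set ℝ := Set.Icc c d with hs
  have hcs : c ∈ s := ⟨le_rfl, hcd⟩
  have hds : d ∈ s := ⟨hcd, le_rfl⟩
  have hloc : LocallyBoundedVariationOn g s := hg.locallyBoundedVariationOn
  set var : ℝ → ℝ := variationOnFromTo g s c with hvar
  set L : ℝ := var d with hL
  have hL0 : 0 ≤ L := variationOnFromTo.nonneg_of_le g s hcd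
  have hvarc : var c = 0 := variationOnFromTo.self g s c
  have hmono : MonotoneOn var s := variationOnFromTo.monotoneOn hloc hcs
  -- var is Lipschitz on s
  have hvarlip : LipschitzOnWith K var s := by
    intro x hx y hy
    wlog hxy : x ≤ y generalizing x y
    · rw [edist_comm, edist_comm x y]; exact this hy hx (le_of_not_ge hxy)
    have hadd : var y - var x = variationOnFromTo g s x y := by
      have h' := variationOnFromTo.add hloc hcs hx hy
      simp only [hvar]; linarith
    have hvv : variationOnFromTo g s x y = (eVariationOn g (s ∩ Set.Icc x y)).toReal :=
      variationOnFromTo.eq_of_le g s hxy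
    have hbd : eVariationOn g (s ∩ Set.Icc x y) ≤ (K : ENNReal) * ENNReal.ofReal (y - x) :=
      lipschitzOnWith_eVariationOn_le hg inter_subset_left inter_subset_right
    have hne : eVariationOn g (s ∩ Set.Icc x y) ≠ ⊤ := hloc x y hx hy
    have hreal : variationOnFromTo g s x y ≤ (K : ℝ) * (y - x) := by
      rw [hvv]
      have := ENNReal.toReal_mono
        (ENNReal.mul_ne_top ENNReal.coe_ne_top ENNReal.ofReal_ne_top) hbd
      rwa [ENNReal.toReal_mul, ENNReal.coe_toReal,
        ENNReal.toReal_ofReal (by linarith)] at this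
    have hxy' : var x ≤ var y := hmono hx hy hxy
    rw [edist_dist, Real.dist_eq, abs_sub_comm, abs_of_nonneg (sub_nonneg.2 hxy'), hadd]
    calc ENNReal.ofReal (variationOnFromTo g s x y)
        ≤ ENNReal.ofReal ((K:ℝ) * (y - x)) := ENNReal.ofReal_le_ofReal hreal
      _ = (K : ENNReal) * ENNReal.ofReal (y - x) := by
          rw [ENNReal.ofReal_mul K.coe_nonneg, ENNReal.ofReal_coe_nnreal]
      _ = (K : ENNReal) * edist x y := by
          rw [edist_dist, Real.dist_eq, abs_of_nonpos (by linarith), neg_sub]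
  have hcont : ContinuousOn var s := hvarlip.continuousOn
  have himg : var '' s = Set.Icc 0 L := by
    apply Set.Subset.antisymm
    · rintro _ ⟨b, hb, rfl⟩
      exact ⟨hvarc ▸ hmono hcs hb hb.1, hmono hb hds hb.2⟩
    · have h' := intermediate_value_Icc hcd hcont
      rw [hvarc] at h'
      exact h'
  set f : ℝ → X := naturalParameterization g s c with hfdef
  have hus : HasUnitSpeedOn f (Set.Icc 0 L) := by
    have h' := has_unit_speed_naturalParameterization g hloc hcs
    rwa [himg] at h'
  have hflip : LipschitzOnWith 1 f (Set.Icc 0 L) := by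
    intro x hx y hy
    wlog hxy : x ≤ y generalizing x y
    · rw [edist_comm, edist_comm x y]; exact this hy hx (le_of_not_ge hxy)
    have hx' : x ∈ Set.Icc 0 L ∩ Set.Icc x y := ⟨hx, le_rfl, hxy⟩
    have hy' : y ∈ Set.Icc 0 L ∩ Set.Icc x y := ⟨hy, hxy, le_rfl⟩
    calc edist (f x) (f y) ≤ eVariationOn f (Set.Icc 0 L ∩ Set.Icc x y) :=
          eVariationOn.edist_le f hx' hy'
      _ = ENNReal.ofReal (((1:NNReal):ℝ) * (y - x)) := hus hx hy
      _ ≤ (1:NNReal) * edist x y := by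
          rw [NNReal.coe_one, one_mul, ENNReal.coe_one, one_mul, edist_dist, Real.dist_eq,
            abs_of_nonpos (by linarith), neg_sub]
  have hfg : ∀ b ∈ s, f (var b) = g b := fun b hb =>
    edist_eq_zero.1 (edist_naturalParameterization_eq_zero hloc hcs hb)
  have himgf : f '' Set.Icc 0 L = A := by
    rw [hA, ← himg, ← Set.image_comp]
    exact Set.image_congr hfg
  refine ⟨0, L, hL0, f, 1, hflip, himgf, ?_⟩
  have hae : ∀ᵐ t ∂(volume.restrict (Set.Icc 0 L)), t ∈ Set.Ioo 0 L := by
    rw [← Measure.restrict_congr_set Ioo_ae_eq_Icc]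
    exact ae_restrict_mem measurableSet_Ioo
  filter_upwards [hae] with t ht
  obtain ⟨ht0, htL⟩ := ht
  -- upper bound
  have hub : upperDilatation f (Set.Icc 0 L) t ≤ 1 := by
    apply Filter.limsup_le_of_le (by isBoundedDefault)
    apply Filter.Eventually.of_forall
    intro ε
    refine iSup_le fun v => iSup_le fun hv => iSup_le fun w => iSup_le fun hw =>
      iSup_le fun hvw => ?_
    apply ENNReal.div_le_of_le_mul
    calc edist (f v) (f w) ≤ 1 * edist v w := hflip hv.1 hw.1
      _ = 1 * ENNReal.ofReal |v - w| := by rw [edist_dist, Real.dist_eq]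
  refine le_antisymm hub (not_lt.1 fun hlt => ?_)
  -- lower bound by contradiction
  set F : ℝ → ENNReal := fun ε =>
      ⨆ (v : ℝ) (_ : v ∈ Set.Icc 0 L ∩ Set.Ioo (t - ε) (t + ε))
        (w : ℝ) (_ : w ∈ Set.Icc 0 L ∩ Set.Ioo (t - ε) (t + ε)) (_ : v ≠ w),
          edist (f v) (f w) / ENNReal.ofReal |v - w| with hF
  have hlt' : Filter.limsup F (nhdsWithin (0:ℝ) (Set.Ioi 0)) < 1 := hlt
  have hev := Filter.eventually_lt_of_limsup_lt hlt'
  obtain ⟨ε, hθ1, hε⟩ := (hev.and eventually_mem_nhdsWithin).exists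
  have hεpos : (0:ℝ) < ε := hε
  have hθtop : F ε ≠ ⊤ := hθ1.ne_top
  set N : Set ℝ := Set.Icc 0 L ∩ Set.Ioo (t - ε) (t + ε) with hNdef
  have hlipN : LipschitzOnWith (F ε).toNNReal f N := by
    intro v hv w hw
    rcases eq_or_ne v w with rfl | hvw
    · simp
    have hterm : edist (f v) (f w) / ENNReal.ofReal |v - w| ≤ F ε := by
      refine le_iSup_of_le v (le_iSup_of_le hv (le_iSup_of_le w (le_iSup_of_le hw
        (le_iSup_of_le hvw le_rfl))))
    have habs : 0 < |v - w| := abs_pos.2 (sub_ne_zero.2 hvw)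
    have h0 : ENNReal.ofReal |v - w| ≠ 0 := by
      simp only [ne_eq, ENNReal.ofReal_eq_zero, not_le]
      exact habs
    have h1 := (ENNReal.div_le_iff h0 ENNReal.ofReal_ne_top).1 hterm
    calc edist (f v) (f w) ≤ F ε * ENNReal.ofReal |v - w| := h1
      _ = ((F ε).toNNReal : ENNReal) * edist v w := by
          rw [ENNReal.coe_toNNReal hθtop, edist_dist, Real.dist_eq]
  set x : ℝ := max 0 (t - ε/2) with hxdef
  set y : ℝ := min L (t + ε/2) with hydef
  have hx : x ∈ Set.Icc 0 L := ⟨le_max_left _ _, max_le hL0 (by linarith)⟩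
  have hy : y ∈ Set.Icc 0 L := ⟨le_min hL0 (by linarith), min_le_left _ _⟩
  have hxy : x < y := max_lt (lt_min (ht0.trans htL) (by linarith)) (lt_min (by linarith) (by linarith))
  have hsub : Set.Icc 0 L ∩ Set.Icc x y ⊆ N := by
    rintro z ⟨hz1, hz2⟩
    refine ⟨hz1, ?_, ?_⟩
    · calc t - ε < t - ε/2 := by linarith
        _ ≤ x := le_max_right _ _
        _ ≤ z := hz2.1
    · calc z ≤ y := hz2.2
        _ ≤ t + ε/2 := min_le_right _ _
        _ < t + ε := by linarith
  have hvar_eq : eVariationOn f (Set.Icc 0 L ∩ Set.Icc x y)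
      = ENNReal.ofReal (((1:NNReal):ℝ) * (y - x)) := hus hx hy
  have hbd2 : eVariationOn f (Set.Icc 0 L ∩ Set.Icc x y)
      ≤ ((F ε).toNNReal : ENNReal) * ENNReal.ofReal (y - x) :=
    lipschitzOnWith_eVariationOn_le hlipN (Set.Subset.trans hsub (le_refl N)) Set.inter_subset_right
  have hkey : ENNReal.ofReal (y - x) ≤ ((F ε).toNNReal : ENNReal) * ENNReal.ofReal (y - x) := by
    rw [NNReal.coe_one, one_mul] at hvar_eq
    calc ENNReal.ofReal (y - x) = eVariationOn f (Set.Icc 0 L ∩ Set.Icc x y) := hvar_eq.symm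
      _ ≤ ((F ε).toNNReal : ENNReal) * ENNReal.ofReal (y - x) := hbd2
  have hyx0 : (0:ℝ) < y - x := sub_pos.2 hxy
  have hof0 : ENNReal.ofReal (y - x) ≠ 0 := by
    simp only [ne_eq, ENNReal.ofReal_eq_zero, not_le]; exact hyx0
  have hlt2 : ((F ε).toNNReal : ENNReal) * ENNReal.ofReal (y - x)
      < 1 * ENNReal.ofReal (y - x) := by
    refine ENNReal.mul_lt_mul_left hof0 ENNReal.ofReal_ne_top ?_
    rwa [ENNReal.coe_toNNReal hθtop]
  rw [one_mul] at hlt2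
  exact absurd (hkey.trans_lt hlt2) (lt_irrefl _)
end

section
/- Let (X,d) be a complete metric space and c : (a,b) → X an absolutely continuous curve. Then: (i) c is metrically derivable for Lebesgue-almost every t ∈ (a,b), i.e. the metric derivative md(c)(t) = lim_{s→t} d(c(s),c(t))/|s−t| exists and is finite for a.e. t; (ii) the function md(c) belongs to L¹((a,b)); and (iii) md(c) is minimal among upper gradients: for every upper gradient m of c one has md(c)(t) ≤ m(t) for a.e. t ∈ (a,b). -/
open MeasureTheory Filter Set

open Metric
open scoped ENNReal



theorem ae_hasDerivAt_primitive {m : ℝ → ℝ} (hm : Integrable m volume) :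
    ∀ᵐ t : ℝ, HasDerivAt (fun u => ∫ x in (0:ℝ)..u, m x) (m t) t := by
  have hloc : LocallyIntegrable m volume := hm.locallyIntegrable
  filter_upwards [IsUnifLocDoublingMeasure.ae_tendsto_average_norm_sub (μ := volume) hloc 1]
    with t ht
  have havg : Tendsto (fun s : ℝ => ⨍ y in closedBall ((s+t)/2) (|s-t|/2), ‖m y - m t‖)
      (nhdsWithin t {t}ᶜ) (nhds 0) := by
    apply ht (ι := ℝ) (l := nhdsWithin t {t}ᶜ) (fun s => (s+t)/2) (fun s => |s-t|/2)
    · have h1 : Tendsto (fun s : ℝ => |s - t|/2) (nhds t) (nhds 0) := by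
        have h0 : Tendsto (fun s : ℝ => s - t) (nhds t) (nhds 0) := by
          simpa using (continuous_sub_right t).tendsto t
        simpa using (h0.abs).div_const 2
      rw [tendsto_nhdsWithin_iff]
      refine ⟨h1.mono_left nhdsWithin_le_nhds, ?_⟩
      filter_upwards [self_mem_nhdsWithin] with s hs
      have h2 : s - t ≠ 0 := sub_ne_zero.2 hs
      have : 0 < |s - t| := abs_pos.2 h2
      exact mem_Ioi.2 (by positivity)
    · filter_upwards with s
      rw [mem_closedBall, one_mul, Real.dist_eq]
      have : t - (s+t)/2 = -((s-t)/2) := by ring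
      rw [this, abs_neg, abs_div, abs_two]
  rw [hasDerivAt_iff_tendsto]
  have key : ∀ s : ℝ, s ≠ t → |s - t|⁻¹ * ‖(∫ x in (0:ℝ)..s, m x) - (∫ x in (0:ℝ)..t, m x)
      - (s - t) • m t‖ ≤ ⨍ y in closedBall ((s+t)/2) (|s-t|/2), ‖m y - m t‖ := by
    intro s hs
    have hii : ∀ u v : ℝ, IntervalIntegrable m volume u v := fun u v =>
      hm.intervalIntegrable
    have hsub : (∫ x in (0:ℝ)..s, m x) - (∫ x in (0:ℝ)..t, m x) = ∫ x in t..s, m x :=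
      intervalIntegral.integral_interval_sub_left (hii 0 s) (hii 0 t)
    have hconst : (s - t) • m t = ∫ _x in t..s, m t := by
      rw [intervalIntegral.integral_const]
    rw [hsub, hconst, ← intervalIntegral.integral_sub (hii t s) intervalIntegrable_const]
    have hIsub : Set.uIoc t s ⊆ closedBall ((s+t)/2) (|s-t|/2) := by
      intro y hy
      rw [mem_closedBall, Real.dist_eq, abs_le]
      rcases le_total t s with h | h
      · rw [uIoc_of_le h] at hy
        rw [abs_of_nonneg (by linarith : (0:ℝ) ≤ s - t)]
        constructor <;> [nlinarith [hy.1, hy.2]; nlinarith [hy.1, hy.2]]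
      · rw [uIoc_of_ge h] at hy
        rw [abs_of_nonpos (by linarith : s - t ≤ 0)]
        constructor <;> [nlinarith [hy.1, hy.2]; nlinarith [hy.1, hy.2]]
    have h1 : ‖∫ x in t..s, (m x - m t)‖ ≤ ∫ y in closedBall ((s+t)/2) (|s-t|/2), ‖m y - m t‖ := by
      refine le_trans (intervalIntegral.norm_integral_le_integral_norm_uIoc) ?_
      have hint : IntegrableOn (fun y => ‖m y - m t‖) (closedBall ((s+t)/2) (|s-t|/2)) volume :=
        (hm.integrableOn.sub (integrableOn_const measure_closedBall_lt_top.ne)).norm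
      apply setIntegral_mono_set hint
      · filter_upwards with y using norm_nonneg _
      · exact HasSubset.Subset.eventuallyLE hIsub
    have hvolpos : 0 < |s - t| := abs_pos.2 (sub_ne_zero.2 hs)
    have hvol : (volume (closedBall ((s+t)/2) (|s-t|/2))).toReal = |s - t| := by
      rw [Real.volume_closedBall, ENNReal.toReal_ofReal (by positivity)]
      ring
    rw [setAverage_eq, measureReal_def, hvol, smul_eq_mul]
    exact mul_le_mul_of_nonneg_left h1 (inv_nonneg.2 (le_of_lt hvolpos))
  have hnonneg : ∀ s : ℝ, 0 ≤ |s - t|⁻¹ * ‖(∫ x in (0:ℝ)..s, m x) - (∫ x in (0:ℝ)..t, m x)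
      - (s - t) • m t‖ := fun s => by positivity
  have hpunct : Tendsto (fun s : ℝ => |s - t|⁻¹ * ‖(∫ x in (0:ℝ)..s, m x) -
      (∫ x in (0:ℝ)..t, m x) - (s - t) • m t‖) (nhdsWithin t {t}ᶜ) (nhds 0) := by
    apply squeeze_zero' (Filter.Eventually.of_forall hnonneg) _ havg
    filter_upwards [self_mem_nhdsWithin] with s hs
    exact key s hs
  have hft : |t - t|⁻¹ * ‖(∫ x in (0:ℝ)..t, m x) - (∫ x in (0:ℝ)..t, m x)
      - (t - t) • m t‖ = 0 := by simp
  have hsup : nhds t = nhdsWithin t {t}ᶜ ⊔ pure t := (nhdsNE_sup_pure t).symm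
  rw [hsup]
  rw [Filter.tendsto_sup]
  refine ⟨hpunct, ?_⟩
  rw [Filter.tendsto_pure_left]
  intro u hu
  simpa [hft] using mem_of_mem_nhds hu

theorem monotone_deriv_nonneg {ψ : ℝ → ℝ} (hmono : Monotone ψ) (r : ℝ) : 0 ≤ deriv ψ r := by
  by_cases h : DifferentiableAt ℝ ψ r
  · have hs : Tendsto (slope ψ r) (nhdsWithin r {r}ᶜ) (nhds (deriv ψ r)) :=
      hasDerivAt_iff_tendsto_slope.1 h.hasDerivAt
    refine ge_of_tendsto hs ?_
    filter_upwards [self_mem_nhdsWithin] with s hs'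
    rw [slope_def_field]
    rcases lt_or_gt_of_ne (hs' : s ≠ r) with h' | h'
    · rw [show ψ s - ψ r = -(ψ r - ψ s) by ring, show s - r = -(r - s) by ring, neg_div_neg_eq]
      exact div_nonneg (by simp [sub_nonneg, hmono h'.le]) (by linarith)
    · exact div_nonneg (by simp [sub_nonneg, hmono h'.le]) (by linarith)
  · rw [deriv_zero_of_not_differentiableAt h]

theorem integral_deriv_le_of_monotone {ψ : ℝ → ℝ} (hmono : Monotone ψ) (hcont : Continuous ψ)
    {s t : ℝ} (hst : s ≤ t) :
    IntegrableOn (deriv ψ) (Ioc s t) ∧ ∫ r in Ioc s t, deriv ψ r ≤ ψ t - ψ s := by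
  set u : ℕ → ℝ := fun k => 1 / (k + 1) with hu
  have hupos : ∀ k, 0 < u k := fun k => by positivity
  -- the difference-quotient functions
  set f : ℕ → ℝ → ℝ≥0∞ := fun k r => ENNReal.ofReal ((ψ (r + u k) - ψ r) * (k + 1)) with hf
  have hfmeas : ∀ k, Measurable (f k) := by
    intro k
    exact (((hcont.comp (continuous_id.add continuous_const)).sub hcont).mul
      continuous_const).measurable.ennreal_ofReal
  -- a.e. convergence of difference quotients to the derivative
  have hae : ∀ᵐ r : ℝ, ENNReal.ofReal (deriv ψ r) = Filter.liminf (fun k => f k r) Filter.atTop := by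
    filter_upwards [hmono.ae_differentiableAt] with r hr
    have hslope : Tendsto (slope ψ r) (nhdsWithin r {r}ᶜ) (nhds (deriv ψ r)) :=
      hasDerivAt_iff_tendsto_slope.1 hr.hasDerivAt
    have htend0 : Tendsto (fun k : ℕ => r + u k) Filter.atTop (nhdsWithin r {r}ᶜ) := by
      rw [tendsto_nhdsWithin_iff]
      constructor
      · have : Tendsto u Filter.atTop (nhds 0) := tendsto_one_div_add_atTop_nhds_zero_nat
        simpa using (tendsto_const_nhds (x := r)).add this
      · filter_upwards with k
        simp only [mem_compl_iff, mem_singleton_iff]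
        have := hupos k; intro hcontra; nlinarith [hcontra]
    have h1 : Tendsto (fun k => (ψ (r + u k) - ψ r) * (k + 1)) Filter.atTop
        (nhds (deriv ψ r)) := by
      have := hslope.comp htend0
      have heq : ∀ k : ℕ, slope ψ r (r + u k) = (ψ (r + u k) - ψ r) * (k + 1) := by
        intro k
        rw [slope_def_field]
        have : r + u k - r = u k := by ring
        rw [this, hu]
        field_simp
      convert this using 1
      ext k
      exact (heq k).symm
    have h2 : Tendsto (fun k => f k r) Filter.atTop (nhds (ENNReal.ofReal (deriv ψ r))) :=
      (ENNReal.continuous_ofReal.tendsto _).comp h1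
    exact (h2.liminf_eq).symm
  -- Fatou
  have fatou : ∫⁻ r in Ioc s t, ENNReal.ofReal (deriv ψ r) ≤
      Filter.liminf (fun k => ∫⁻ r in Ioc s t, f k r) Filter.atTop := by
    calc ∫⁻ r in Ioc s t, ENNReal.ofReal (deriv ψ r)
        = ∫⁻ r in Ioc s t, Filter.liminf (fun k => f k r) Filter.atTop :=
          lintegral_congr_ae (ae_restrict_of_ae hae)
      _ ≤ Filter.liminf (fun k => ∫⁻ r in Ioc s t, f k r) Filter.atTop :=
          lintegral_liminf_le (fun k => hfmeas k)
  -- compute the integral of the difference quotient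
  have hbound : ∀ k, ∫⁻ r in Ioc s t, f k r ≤ ENNReal.ofReal ((ψ (t + u k) - ψ s)) := by
    intro k
    have hgcont : Continuous (fun r => (ψ (r + u k) - ψ r) * (k + 1)) :=
      ((hcont.comp (continuous_id.add continuous_const)).sub hcont).mul continuous_const
    have hgint : IntegrableOn (fun r => (ψ (r + u k) - ψ r) * ((k : ℝ) + 1)) (Ioc s t) volume :=
      hgcont.integrableOn_Ioc
    have hgnn : ∀ r, 0 ≤ (ψ (r + u k) - ψ r) * ((k : ℝ) + 1) := by
      intro r
      exact mul_nonneg (sub_nonneg.2 (hmono (by linarith [hupos k] : r ≤ r + u k)))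
        (by positivity)
    rw [← ofReal_integral_eq_lintegral_ofReal hgint (Filter.Eventually.of_forall hgnn)]
    apply ENNReal.ofReal_le_ofReal
    -- ∫ r in Ioc s t, (ψ (r + u k) - ψ r) * (k+1) ≤ ψ (t + u k) - ψ s
    have hii : ∀ a' b' : ℝ, IntervalIntegrable ψ volume a' b' := fun a' b' =>
      hcont.intervalIntegrable _ _
    have hIoc : ∫ r in Ioc s t, (ψ (r + u k) - ψ r) * ((k : ℝ) + 1)
        = (∫ r in s..t, (ψ (r + u k) - ψ r)) * ((k : ℝ) + 1) := by
      rw [intervalIntegral.integral_of_le hst, ← integral_mul_const]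
    rw [hIoc]
    have hsplit : ∫ r in s..t, (ψ (r + u k) - ψ r)
        = (∫ r in t..(t + u k), ψ r) - ∫ r in s..(s + u k), ψ r := by
      rw [intervalIntegral.integral_sub (Continuous.intervalIntegrable
        (by continuity : Continuous fun r : ℝ => ψ (r + u k)) _ _) (hii s t)]
      rw [intervalIntegral.integral_comp_add_right]
      have e1 : ∫ r in (s + u k)..(t + u k), ψ r
          = (∫ r in s..(t + u k), ψ r) - ∫ r in s..(s + u k), ψ r := by
        rw [eq_sub_iff_add_eq, add_comm, intervalIntegral.integral_add_adjacent_intervals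
          (hii s (s + u k)) (hii (s + u k) (t + u k))]
      have e2 : ∫ r in s..t, ψ r = (∫ r in s..(t + u k), ψ r) - ∫ r in t..(t + u k), ψ r := by
        rw [eq_sub_iff_add_eq, intervalIntegral.integral_add_adjacent_intervals
          (hii s t) (hii t (t + u k))]
      rw [e1, e2]; ring
    rw [hsplit]
    have hb1 : ∫ r in t..(t + u k), ψ r ≤ u k * ψ (t + u k) := by
      have : ∫ r in t..(t + u k), ψ r ≤ ∫ _r in t..(t + u k), ψ (t + u k) := by
        apply intervalIntegral.integral_mono_on (by linarith [hupos k]) (hii _ _)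
          intervalIntegrable_const
        intro x hx; exact hmono hx.2
      refine this.trans_eq ?_
      rw [intervalIntegral.integral_const, smul_eq_mul]
      show (t + u k - t) * ψ (t + u k) = u k * ψ (t + u k)
      ring
    have hb2 : u k * ψ s ≤ ∫ r in s..(s + u k), ψ r := by
      have : ∫ _r in s..(s + u k), ψ s ≤ ∫ r in s..(s + u k), ψ r := by
        apply intervalIntegral.integral_mono_on (by linarith [hupos k])
          intervalIntegrable_const (hii _ _)
        intro x hx; exact hmono hx.1
      calc u k * ψ s = ∫ _r in s..(s + u k), ψ s := by
            rw [intervalIntegral.integral_const, smul_eq_mul]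
            show u k * ψ s = (s + u k - s) * ψ s
            ring
        _ ≤ _ := this
    have hkinv : ((k : ℝ) + 1) = (u k)⁻¹ := by rw [hu]; field_simp
    have : ((∫ r in t..t + u k, ψ r) - ∫ r in s..s + u k, ψ r) ≤ u k * (ψ (t + u k) - ψ s) := by
      nlinarith [hb1, hb2]
    calc ((∫ r in t..t + u k, ψ r) - ∫ r in s..s + u k, ψ r) * ((k : ℝ) + 1)
        ≤ (u k * (ψ (t + u k) - ψ s)) * ((k:ℝ) + 1) := by
          apply mul_le_mul_of_nonneg_right this (by positivity)
      _ = ψ (t + u k) - ψ s := by rw [hkinv]; field_simp [(hupos k).ne']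
  -- pass to the limit in the bound
  have hlim : Filter.liminf (fun k => ∫⁻ r in Ioc s t, f k r) Filter.atTop
      ≤ ENNReal.ofReal (ψ t - ψ s) := by
    have h1 : Tendsto (fun k => ENNReal.ofReal (ψ (t + u k) - ψ s)) Filter.atTop
        (nhds (ENNReal.ofReal (ψ t - ψ s))) := by
      apply (ENNReal.continuous_ofReal.tendsto _).comp
      have h2 : Tendsto (fun k : ℕ => t + u k) Filter.atTop (nhds t) := by
        have : Tendsto u Filter.atTop (nhds 0) := tendsto_one_div_add_atTop_nhds_zero_nat
        simpa using (tendsto_const_nhds (x := t)).add this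
      exact ((hcont.tendsto t).comp h2).sub tendsto_const_nhds
    calc Filter.liminf (fun k => ∫⁻ r in Ioc s t, f k r) Filter.atTop
        ≤ Filter.liminf (fun k => ENNReal.ofReal (ψ (t + u k) - ψ s)) Filter.atTop :=
          Filter.liminf_le_liminf (Filter.Eventually.of_forall hbound)
      _ = ENNReal.ofReal (ψ t - ψ s) := h1.liminf_eq
  have main : ∫⁻ r in Ioc s t, ENNReal.ofReal (deriv ψ r) ≤ ENNReal.ofReal (ψ t - ψ s) :=
    fatou.trans hlim
  -- integrability
  have hdm : Measurable (deriv ψ) := measurable_deriv ψ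
  have hint : IntegrableOn (deriv ψ) (Ioc s t) := by
    constructor
    · exact hdm.aestronglyMeasurable
    · rw [hasFiniteIntegral_iff_norm]
      have : ∀ r, ENNReal.ofReal ‖deriv ψ r‖ = ENNReal.ofReal (deriv ψ r) := by
        intro r; rw [Real.norm_eq_abs, abs_of_nonneg (monotone_deriv_nonneg hmono r)]
      calc ∫⁻ r in Ioc s t, ENNReal.ofReal ‖deriv ψ r‖
          = ∫⁻ r in Ioc s t, ENNReal.ofReal (deriv ψ r) := by
            apply lintegral_congr (fun r => this r)
        _ ≤ ENNReal.ofReal (ψ t - ψ s) := main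
        _ < ⊤ := ENNReal.ofReal_lt_top
  refine ⟨hint, ?_⟩
  have := integral_eq_lintegral_of_nonneg_ae (μ := volume.restrict (Ioc s t))
    (Filter.Eventually.of_forall (fun r => monotone_deriv_nonneg hmono r))
    hdm.aestronglyMeasurable
  rw [this]
  calc (∫⁻ r in Ioc s t, ENNReal.ofReal (deriv ψ r)).toReal
      ≤ (ENNReal.ofReal (ψ t - ψ s)).toReal := ENNReal.toReal_mono ENNReal.ofReal_ne_top main
    _ = ψ t - ψ s := ENNReal.toReal_ofReal (sub_nonneg.2 (hmono hst))


/-- Metric derivative theorem (Ambrosio–Gigli–Savaré, Thm 1.1.2): if `(X,d)` is a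
complete metric space and `c : (a,b) → X` is absolutely continuous (it admits an
upper gradient `m ∈ L¹((a,b))`, `m ≥ 0`, with `d(c(s),c(t)) ≤ ∫_s^t m`), then the
metric derivative `md(c)(t) = lim_{s→t} d(c(s),c(t))/|s-t|` exists for a.e.
`t ∈ (a,b)`, belongs to `L¹((a,b))`, and is minimal among all upper gradients. -/
theorem metric_derivative_of_absolutely_continuous
    {X : Type*} [MetricSpace X] [CompleteSpace X]
    (a b : ℝ) (c : ℝ → X)
    (hac : ∃ m : ℝ → ℝ, (∀ r, 0 ≤ m r) ∧ IntegrableOn m (Set.Ioo a b) ∧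
      ∀ s t : ℝ, a < s → s ≤ t → t < b → dist (c s) (c t) ≤ ∫ r in s..t, m r) :
    ∃ g : ℝ → ℝ,
      -- (i) `c` is metrically derivable a.e., with metric derivative `g`
      (∀ᵐ t ∂(volume.restrict (Set.Ioo a b)),
        Filter.Tendsto (fun s : ℝ => dist (c s) (c t) / |s - t|)
          (nhdsWithin t (Set.Ioo a b \ {t})) (nhds (g t))) ∧
      -- (ii) `md(c) = g` belongs to `L¹((a,b))`
      IntegrableOn g (Set.Ioo a b) ∧
      -- (iii) minimality among upper gradients
      (∀ m : ℝ → ℝ, (∀ r, 0 ≤ m r) → IntegrableOn m (Set.Ioo a b) →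
        (∀ s t : ℝ, a < s → s ≤ t → t < b → dist (c s) (c t) ≤ ∫ r in s..t, m r) →
        ∀ᵐ t ∂(volume.restrict (Set.Ioo a b)), g t ≤ m t) := by
  obtain ⟨m₀, hm0nn, hm0int, hm0ub⟩ := hac
  rcases le_or_gt b a with hba | hab
  · rw [Set.Ioo_eq_empty (not_lt.2 hba)]
    refine ⟨0, ?_, ?_, ?_⟩
    · simp
    · simp [integrableOn_empty]
    · intro m _ _ _
      simp
  -- main case a < b
  classical
  -- extension of m₀ by 0 outside Ioo a b
  set mext : ℝ → ℝ := (Set.Ioo a b).indicator m₀ with hmext_def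
  have hmext_int : Integrable mext volume :=
    (integrable_indicator_iff measurableSet_Ioo).2 hm0int
  have hmext_nn : ∀ r, 0 ≤ mext r := fun r => Set.indicator_nonneg (fun x _ => hm0nn x) r
  set F : ℝ → ℝ := fun u => ∫ x in (0:ℝ)..u, mext x with hF_def
  have hFsub : ∀ u v : ℝ, F v - F u = ∫ r in u..v, mext r := fun u v =>
    intervalIntegral.integral_interval_sub_left (hmext_int.intervalIntegrable)
      (hmext_int.intervalIntegrable)
  have hFmono : Monotone F := by
    intro u v huv
    have h0 : 0 ≤ ∫ r in u..v, mext r :=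
      intervalIntegral.integral_nonneg huv (fun r _ => hmext_nn r)
    have := hFsub u v
    linarith
  have hFcont : Continuous F :=
    intervalIntegral.continuous_primitive (fun a' b' => hmext_int.intervalIntegrable) 0
  -- distance bound via F
  have hdistF : ∀ s t : ℝ, a < s → s ≤ t → t < b → dist (c s) (c t) ≤ F t - F s := by
    intro s t has hst htb
    rw [hFsub]
    refine le_trans (hm0ub s t has hst htb) (le_of_eq ?_)
    apply intervalIntegral.integral_congr
    intro x hx
    rw [Set.uIcc_of_le hst] at hx
    rw [hmext_def]
    rw [Set.indicator_of_mem (Set.mem_of_mem_of_subset hx (Set.Icc_subset_Ioo has htb))]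
  have hdistF' : ∀ s t : ℝ, s ∈ Set.Ioo a b → t ∈ Set.Ioo a b →
      dist (c s) (c t) ≤ |F s - F t| := by
    intro s t hs ht
    rcases le_total s t with h | h
    · rw [abs_sub_comm, abs_of_nonneg (sub_nonneg.2 (hFmono h))]
      exact hdistF s t hs.1 h ht.2
    · rw [abs_of_nonneg (sub_nonneg.2 (hFmono h)), dist_comm]
      exact hdistF t s ht.1 h hs.2
  -- continuity of c on Ioo a b
  have hccont : ∀ t ∈ Set.Ioo a b, ContinuousAt c t := by
    intro t ht
    rw [ContinuousAt, tendsto_iff_dist_tendsto_zero]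
    apply squeeze_zero' (Filter.Eventually.of_forall (fun s => dist_nonneg))
    · filter_upwards [isOpen_Ioo.mem_nhds ht] with s hs
      exact hdistF' s t hs ht
    · have h0 : Tendsto (fun s => F s - F t) (nhds t) (nhds (F t - F t)) :=
        (hFcont.tendsto t).sub tendsto_const_nhds
      rw [sub_self] at h0
      simpa using h0.abs
  -- the countable dense family
  obtain ⟨q, hq⟩ : ∃ u : ℕ → ℝ, DenseRange u := TopologicalSpace.exists_dense_seq ℝ
  set y : ℕ → X := fun n => c (if q n ∈ Set.Ioo a b then q n else (a+b)/2) with hy_def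
  have hdense : ∀ x ∈ Set.Ioo a b, ∀ ε > 0, ∃ n, dist (c x) (y n) < ε := by
    intro x hx ε hε
    obtain ⟨δ, hδ, hδ'⟩ := Metric.continuousAt_iff.1 (hccont x hx) ε hε
    have hne : (Set.Ioo (max a (x - δ)) x).Nonempty :=
      nonempty_Ioo.2 (max_lt_iff.2 ⟨hx.1, by linarith⟩)
    obtain ⟨n, hn⟩ := hq.exists_mem_open isOpen_Ioo hne
    have hmem : q n ∈ Set.Ioo a b :=
      ⟨lt_of_le_of_lt (le_max_left _ _) hn.1, lt_trans hn.2 hx.2⟩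
    refine ⟨n, ?_⟩
    rw [hy_def]
    simp only [hmem, if_pos]
    rw [dist_comm]
    apply hδ'
    rw [Real.dist_eq, abs_sub_lt_iff]
    have := lt_of_le_of_lt (le_max_right a (x - δ)) hn.1
    constructor <;> linarith [hn.2]
  set φ : ℕ → ℝ → ℝ := fun n t => dist (c t) (y n) with hφ_def
  have hφdist : ∀ n, ∀ s t : ℝ, s ∈ Set.Ioo a b → t ∈ Set.Ioo a b →
      |φ n t - φ n s| ≤ |F t - F s| := by
    intro n s t hs ht
    exact le_trans (abs_dist_sub_le (c t) (c s) (y n)) (hdistF' t s ht hs)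
  -- clamping into compact subintervals
  set ak : ℕ → ℝ := fun k => a + (b - a)/(k + 3) with hak_def
  set bk : ℕ → ℝ := fun k => b - (b - a)/(k + 3) with hbk_def
  have hakb : ∀ k, a < ak k ∧ ak k < bk k ∧ bk k < b := by
    intro k
    have h3 : (0:ℝ) < (k:ℝ) + 3 := by positivity
    have h1 : 0 < (b - a)/((k:ℝ) + 3) := div_pos (by linarith) h3
    have h2 : (b - a)/((k:ℝ) + 3) < (b - a)/2 := by
      apply div_lt_div_of_pos_left (by linarith) (by norm_num)
      have := Nat.cast_nonneg (α := ℝ) k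
      linarith
    refine ⟨by rw [hak_def]; simp; linarith, ?_, by rw [hbk_def]; simp; linarith⟩
    rw [hak_def, hbk_def]
    simp only
    linarith
  set clamp : ℕ → ℝ → ℝ := fun k t => max (ak k) (min (bk k) t) with hclamp_def
  have hclamp_mem : ∀ k t, clamp k t ∈ Set.Ioo a b := by
    intro k t
    obtain ⟨h1, h2, h3⟩ := hakb k
    constructor
    · exact lt_of_lt_of_le h1 (le_max_left _ _)
    · rw [hclamp_def]; simp only [max_lt_iff]
      exact ⟨lt_trans h2 h3, lt_of_le_of_lt (min_le_left _ _) h3⟩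
  have hclamp_mono : ∀ k, Monotone (clamp k) := by
    intro k u v huv
    exact max_le_max le_rfl (min_le_min le_rfl huv)
  have hclamp_eq : ∀ k t, ak k ≤ t → t ≤ bk k → clamp k t = t := by
    intro k t h1 h2
    rw [hclamp_def]
    simp only
    rw [min_eq_right h2, max_eq_right h1]
  have hclamp_cont : ∀ k, Continuous (clamp k) :=
    fun k => continuous_const.max (continuous_const.min continuous_id)
  set φbar : ℕ → ℕ → ℝ → ℝ := fun n k t => φ n (clamp k t) with hφbar_def
  have hφbar_cont : ∀ n k, Continuous (φbar n k) := by
    intro n k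
    have h1 : Continuous fun t => c (clamp k t) := by
      rw [continuous_iff_continuousAt]
      intro t
      exact (hccont _ (hclamp_mem k t)).comp (hclamp_cont k).continuousAt
    exact h1.dist continuous_const
  -- key inequality for clamped functions
  have hφbar_key : ∀ (n k : ℕ) (s t : ℝ), s ≤ t → |φbar n k t - φbar n k s| ≤ F t - F s := by
    intro n k s t hst
    have hFc : F (clamp k t) - F (clamp k s) ≤ F t - F s := by
      rcases le_or_gt t (ak k) with h | h
      · have e1 : clamp k t = ak k := by
          rw [hclamp_def]; simp only
          rw [max_eq_left]
          exact le_trans (min_le_right _ _) h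
        have e2 : clamp k s = ak k := by
          rw [hclamp_def]; simp only
          rw [max_eq_left]
          exact le_trans (min_le_right _ _) (le_trans hst h)
        rw [e1, e2, sub_self]
        linarith [hFmono hst]
      rcases le_or_gt (bk k) s with h' | h'
      · have e1 : clamp k t = bk k := by
          rw [hclamp_def]; simp only
          rw [min_eq_left (le_trans h' hst), max_eq_right (hakb k).2.1.le]
        have e2 : clamp k s = bk k := by
          rw [hclamp_def]; simp only
          rw [min_eq_left h', max_eq_right (hakb k).2.1.le]
        rw [e1, e2, sub_self]
        linarith [hFmono hst]
      · have e1 : s ≤ clamp k s := by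
          rw [hclamp_def]; simp only
          rw [min_eq_right h'.le]
          exact le_max_right _ _
        have e2 : clamp k t ≤ t := by
          rw [hclamp_def]; simp only
          exact max_le h.le (min_le_right _ _)
        have := hFmono e1
        have := hFmono e2
        linarith
    refine le_trans ?_ hFc
    have h1 := hφdist n (clamp k s) (clamp k t) (hclamp_mem k s) (hclamp_mem k t)
    refine le_trans h1 (le_of_eq ?_)
    rw [abs_of_nonneg (sub_nonneg.2 (hFmono (hclamp_mono k hst)))]
  have hmono_sub : ∀ n k, Monotone (fun t => F t - φbar n k t) := by
    intro n k u v huv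
    have := hφbar_key n k u v huv
    have := abs_le.1 this
    simp only
    linarith [this.1, this.2]
  have hmono_add : ∀ n k, Monotone (fun t => F t + φbar n k t) := by
    intro n k u v huv
    have := abs_le.1 (hφbar_key n k u v huv)
    simp only
    linarith [this.1, this.2]
  -- choice of k
  have hex_k : ∀ s t : ℝ, a < s → t < b → ∃ k, ak k < s ∧ t < bk k := by
    intro s t has htb
    have hba' : 0 < b - a := by linarith
    have hmin : 0 < min (s - a) (b - t) := lt_min (by linarith) (by linarith)
    obtain ⟨k, hk⟩ := exists_nat_gt ((b - a)/(min (s - a) (b - t)))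
    have h0 : (b - a) < (min (s - a) (b - t)) * ((k:ℝ) + 3) := by
      have h0' := (div_lt_iff₀ hmin).1 hk
      nlinarith [hmin]
    have h1 : (b - a)/((k:ℝ) + 3) < min (s - a) (b - t) := by
      rw [div_lt_iff₀ (by positivity)]
      linarith
    refine ⟨k, ?_, ?_⟩
    · rw [hak_def]; simp only
      have := min_le_left (s - a) (b - t)
      linarith
    · rw [hbk_def]; simp only
      have := min_le_right (s - a) (b - t)
      linarith
  -- a.e. differentiability of clamped functions
  have hdiffbar : ∀ᵐ t : ℝ, ∀ n k : ℕ, DifferentiableAt ℝ (φbar n k) t := by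
    rw [ae_all_iff]
    intro n
    rw [ae_all_iff]
    intro k
    filter_upwards [(hmono_sub n k).ae_differentiableAt, (hmono_add n k).ae_differentiableAt]
      with t h1 h2
    have heq : φbar n k = fun u => ((F u + φbar n k u) - (F u - φbar n k u))/2 := by
      funext u; ring
    rw [heq]
    exact (h2.sub h1).div_const 2
  -- locally, φ n agrees with φbar n k
  have hev : ∀ (n k : ℕ) (t : ℝ), t ∈ Set.Ioo (ak k) (bk k) → φ n =ᶠ[nhds t] φbar n k := by
    intro n k t ht
    filter_upwards [isOpen_Ioo.mem_nhds ht] with u hu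
    rw [hφbar_def]
    simp only
    rw [hclamp_eq k u hu.1.le hu.2.le]
  have hdiffφ : ∀ᵐ t : ℝ, ∀ n : ℕ, t ∈ Set.Ioo a b → DifferentiableAt ℝ (φ n) t := by
    filter_upwards [hdiffbar] with t h n ht
    obtain ⟨k, hk1, hk2⟩ := hex_k t t ht.1 ht.2
    exact (h n k).congr_of_eventuallyEq (hev n k t ⟨hk1, hk2⟩)
  -- punctured neighborhood filter inside Ioo a b
  have hfilter : ∀ t ∈ Set.Ioo a b, nhdsWithin t {t}ᶜ = nhdsWithin t (Set.Ioo a b \ {t}) := by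
    intro t ht
    rw [nhdsWithin_restrict' ({t}ᶜ) (isOpen_Ioo.mem_nhds ht)]
    congr 1
    rw [Set.diff_eq, Set.inter_comm]
  have hfNeBot : ∀ t ∈ Set.Ioo a b, (nhdsWithin t (Set.Ioo a b \ {t})).NeBot := by
    intro t ht
    rw [← hfilter t ht]
    infer_instance
  -- derivative bound at Lebesgue points of an arbitrary upper gradient
  have hderiv_bound : ∀ (m : ℝ → ℝ), (∀ r, 0 ≤ m r) → IntegrableOn m (Set.Ioo a b) →
      (∀ s t : ℝ, a < s → s ≤ t → t < b → dist (c s) (c t) ≤ ∫ r in s..t, m r) →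
      ∀ᵐ t : ℝ, t ∈ Set.Ioo a b → ∀ n, |deriv (φ n) t| ≤ m t := by
    intro m hmnn hmint hmub
    set mh : ℝ → ℝ := (Set.Ioo a b).indicator m with hmh_def
    have hmh_int : Integrable mh volume := (integrable_indicator_iff measurableSet_Ioo).2 hmint
    set M : ℝ → ℝ := fun u => ∫ x in (0:ℝ)..u, mh x with hM_def
    have hMsub : ∀ u v : ℝ, M v - M u = ∫ r in u..v, mh r := fun u v =>
      intervalIntegral.integral_interval_sub_left (hmh_int.intervalIntegrable)
        (hmh_int.intervalIntegrable)
    have hMdist : ∀ s t : ℝ, s ∈ Set.Ioo a b → t ∈ Set.Ioo a b →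
        dist (c s) (c t) ≤ |M s - M t| := by
      have hd : ∀ s t : ℝ, a < s → s ≤ t → t < b → dist (c s) (c t) ≤ M t - M s := by
        intro s t has hst htb
        rw [hMsub]
        refine le_trans (hmub s t has hst htb) (le_of_eq ?_)
        apply intervalIntegral.integral_congr
        intro x hx
        rw [Set.uIcc_of_le hst] at hx
        rw [hmh_def]
        rw [Set.indicator_of_mem (Set.mem_of_mem_of_subset hx (Set.Icc_subset_Ioo has htb))]
      intro s t hs ht
      rcases le_total s t with h | h
      · have h1 := hd s t hs.1 h ht.2
        have h2 : M s ≤ M t := by linarith [dist_nonneg (x := c s) (y := c t)]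
        rw [abs_sub_comm, abs_of_nonneg (by linarith)]
        exact h1
      · have h1 := hd t s ht.1 h hs.2
        rw [dist_comm] at h1
        have h2 : M t ≤ M s := by linarith [dist_nonneg (x := c s) (y := c t)]
        rw [abs_of_nonneg (by linarith)]
        exact h1
    filter_upwards [ae_hasDerivAt_primitive hmh_int, hdiffφ] with t hMt hdf ht n
    have hne := hfNeBot t ht
    have hsubset : Set.Ioo a b \ {t} ⊆ {t}ᶜ := fun u hu => hu.2
    have h1 : Tendsto (fun s => |slope (φ n) t s|) (nhdsWithin t (Set.Ioo a b \ {t}))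
        (nhds |deriv (φ n) t|) :=
      ((hasDerivAt_iff_tendsto_slope.1 (hdf n ht).hasDerivAt).mono_left
        (nhdsWithin_mono _ hsubset)).abs
    have h2 : Tendsto (fun s => |slope M t s|) (nhdsWithin t (Set.Ioo a b \ {t}))
        (nhds |mh t|) :=
      ((hasDerivAt_iff_tendsto_slope.1 hMt).mono_left (nhdsWithin_mono _ hsubset)).abs
    have hle : ∀ᶠ s in nhdsWithin t (Set.Ioo a b \ {t}),
        |slope (φ n) t s| ≤ |slope M t s| := by
      filter_upwards [self_mem_nhdsWithin] with s hs
      rw [slope_def_field, slope_def_field, abs_div, abs_div]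
      have hnum : |φ n s - φ n t| ≤ |M s - M t| := by
        refine le_trans ?_ (hMdist s t hs.1 ht)
        have h3 := abs_dist_sub_le (c s) (c t) (y n)
        rw [hφ_def]
        simpa using h3
      gcongr
    have hfin : |deriv (φ n) t| ≤ |mh t| := le_of_tendsto_of_tendsto h1 h2 hle
    have : mh t = m t := Set.indicator_of_mem ht m
    rw [this, abs_of_nonneg (hmnn t)] at hfin
    exact hfin
  -- the candidate metric derivative
  set G : ℝ → ℝ≥0∞ := fun t => ⨆ n, ENNReal.ofReal |deriv (φ n) t| with hG_def
  have hGmeas : Measurable G := by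
    apply Measurable.iSup
    intro n
    exact ((measurable_deriv (φ n)).abs).ennreal_ofReal
  set g : ℝ → ℝ := fun t => (G t).toReal with hg_def
  have hgmeas : Measurable g := hGmeas.ennreal_toReal
  have hgnn : ∀ t, 0 ≤ g t := fun t => ENNReal.toReal_nonneg
  have hGbound : ∀ᵐ t : ℝ, t ∈ Set.Ioo a b → G t ≤ ENNReal.ofReal (m₀ t) := by
    filter_upwards [hderiv_bound m₀ hm0nn hm0int hm0ub] with t h ht
    exact iSup_le fun n => ENNReal.ofReal_le_ofReal (h ht n)
  have hgle : ∀ (m : ℝ → ℝ), (∀ r, 0 ≤ m r) → IntegrableOn m (Set.Ioo a b) →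
      (∀ s t : ℝ, a < s → s ≤ t → t < b → dist (c s) (c t) ≤ ∫ r in s..t, m r) →
      ∀ᵐ t : ℝ, t ∈ Set.Ioo a b → g t ≤ m t := by
    intro m hmnn hmint hmub
    filter_upwards [hderiv_bound m hmnn hmint hmub] with t h ht
    have h1 : G t ≤ ENNReal.ofReal (m t) := iSup_le fun n => ENNReal.ofReal_le_ofReal (h ht n)
    rw [hg_def]
    calc (G t).toReal ≤ (ENNReal.ofReal (m t)).toReal :=
          ENNReal.toReal_mono ENNReal.ofReal_ne_top h1
      _ = m t := ENNReal.toReal_ofReal (hmnn t)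
  have hg_comp : ∀ᵐ t : ℝ, t ∈ Set.Ioo a b → (G t ≠ ⊤ ∧ ∀ n, |deriv (φ n) t| ≤ g t) := by
    filter_upwards [hGbound] with t h ht
    have hfin : G t ≠ ⊤ := (lt_of_le_of_lt (h ht) ENNReal.ofReal_lt_top).ne
    refine ⟨hfin, fun n => ?_⟩
    have h1 : ENNReal.ofReal |deriv (φ n) t| ≤ G t := le_iSup (fun n => ENNReal.ofReal |deriv (φ n) t|) n
    have h2 := ENNReal.toReal_mono hfin h1
    rw [ENNReal.toReal_ofReal (abs_nonneg _)] at h2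
    exact h2
  have hg_int : IntegrableOn g (Set.Ioo a b) := by
    apply Integrable.mono' hm0int hgmeas.aestronglyMeasurable
    filter_upwards [ae_restrict_of_ae (hgle m₀ hm0nn hm0int hm0ub),
      ae_restrict_mem measurableSet_Ioo] with t h1 h2
    rw [Real.norm_eq_abs, abs_of_nonneg (hgnn t)]
    exact h1 h2
  -- g is an upper gradient
  have hUG : ∀ s t : ℝ, a < s → s ≤ t → t < b → dist (c s) (c t) ≤ ∫ r in Set.Ioc s t, g r := by
    intro s t has hst htb
    obtain ⟨k, hk1, hk2⟩ := hex_k s t has htb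
    apply le_of_forall_pos_le_add
    intro ε hε
    have hsIoo : s ∈ Set.Ioo a b := ⟨has, lt_of_le_of_lt hst htb⟩
    obtain ⟨n, hn⟩ := hdense s hsIoo (ε/2) (by linarith)
    -- FTC-type bound for φ n
    have hφbound : φ n t - φ n s ≤ ∫ r in Set.Ioc s t, g r := by
      obtain ⟨hψint, hψle⟩ := integral_deriv_le_of_monotone (hmono_sub n k)
        (hFcont.sub (hφbar_cont n k)) hst
      have het : φbar n k t = φ n t := by
        rw [hφbar_def]; simp only
        rw [hclamp_eq k t (le_trans hk1.le hst) hk2.le]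
      have hes : φbar n k s = φ n s := by
        rw [hφbar_def]; simp only
        rw [hclamp_eq k s hk1.le (le_trans hst hk2.le)]
      have hF' : F t - F s = ∫ r in Set.Ioc s t, mext r := by
        rw [hFsub, intervalIntegral.integral_of_le hst]
      have hsub_Ioo : Set.Ioc s t ⊆ Set.Ioo (ak k) (bk k) := fun r hr =>
        ⟨lt_of_lt_of_le hk1 (le_of_lt hr.1), lt_of_le_of_lt hr.2 hk2⟩
      have hsub_ab : Set.Ioc s t ⊆ Set.Ioo a b := fun r hr =>
        ⟨lt_trans has hr.1, lt_of_le_of_lt hr.2 htb⟩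
      have hae : ∀ᵐ r ∂(volume.restrict (Set.Ioc s t)),
          mext r - deriv (fun u => F u - φbar n k u) r ≤ g r := by
        filter_upwards [ae_restrict_of_ae (ae_hasDerivAt_primitive hmext_int),
          ae_restrict_of_ae hdiffbar, ae_restrict_of_ae hg_comp,
          ae_restrict_mem measurableSet_Ioc] with r hF hdb hcomp hr
        have hrIoo : r ∈ Set.Ioo (ak k) (bk k) := hsub_Ioo hr
        have hrab : r ∈ Set.Ioo a b := hsub_ab hr
        have hder : deriv (fun u => F u - φbar n k u) r = mext r - deriv (φbar n k) r := by
          exact (hF.sub (hdb n k).hasDerivAt).deriv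
        have hde : deriv (φ n) r = deriv (φbar n k) r := (hev n k r hrIoo).deriv_eq
        rw [hder]
        have h1 : deriv (φ n) r ≤ |deriv (φ n) r| := le_abs_self _
        have h2 := (hcomp hrab).2 n
        rw [hde] at h1 h2
        linarith
      calc φ n t - φ n s
          = (F t - F s) - ((F t - φbar n k t) - (F s - φbar n k s)) := by
            rw [het, hes]; ring
        _ ≤ (F t - F s) - ∫ r in Set.Ioc s t, deriv (fun u => F u - φbar n k u) r := by
            linarith [hψle]
        _ = ∫ r in Set.Ioc s t, (mext r - deriv (fun u => F u - φbar n k u) r) := by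
            rw [hF', ← integral_sub hmext_int.integrableOn hψint]
        _ ≤ ∫ r in Set.Ioc s t, g r :=
            integral_mono_ae (hmext_int.integrableOn.sub hψint)
              (hg_int.mono_set hsub_ab) hae
    have htri : dist (c s) (c t) ≤ 2*(ε/2) + (φ n t - φ n s) := by
      have h1 : dist (c s) (c t) ≤ dist (c s) (y n) + dist (y n) (c t) := dist_triangle _ _ _
      have h2 : dist (y n) (c t) = φ n t := by rw [hφ_def]; simp only [dist_comm]
      have h3 : dist (c s) (y n) = φ n s := by rw [hφ_def]
      rw [h2, h3] at h1
      have h4 : φ n s < ε/2 := by rw [← h3]; exact hn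
      linarith
    linarith [hφbound, htri]
  -- primitive of (the extension of) g
  set gh : ℝ → ℝ := (Set.Ioo a b).indicator g with hgh_def
  have hgh_int : Integrable gh volume := (integrable_indicator_iff measurableSet_Ioo).2 hg_int
  set Gh : ℝ → ℝ := fun u => ∫ x in (0:ℝ)..u, gh x with hGh_def
  have hGh_sub : ∀ u v : ℝ, Gh v - Gh u = ∫ r in u..v, gh r := fun u v =>
    intervalIntegral.integral_interval_sub_left (hgh_int.intervalIntegrable)
      (hgh_int.intervalIntegrable)
  have hUG' : ∀ s t : ℝ, a < s → s ≤ t → t < b → dist (c s) (c t) ≤ Gh t - Gh s := by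
    intro s t has hst htb
    rw [hGh_sub, intervalIntegral.integral_of_le hst]
    refine le_trans (hUG s t has hst htb) (le_of_eq ?_)
    apply setIntegral_congr_fun measurableSet_Ioc
    intro r hr
    have hmem : r ∈ Set.Ioo a b := ⟨lt_trans has hr.1, lt_of_le_of_lt hr.2 htb⟩
    rw [hgh_def]
    exact (Set.indicator_of_mem hmem g).symm
  -- conclusion
  refine ⟨g, ?_, hg_int, ?_⟩
  · -- (i) the metric derivative exists a.e. and equals g
    filter_upwards [ae_restrict_mem measurableSet_Ioo, ae_restrict_of_ae hdiffφ,
      ae_restrict_of_ae hg_comp, ae_restrict_of_ae (ae_hasDerivAt_primitive hgh_int)]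
      with t ht hdf hcomp hGht
    have hsubset : Set.Ioo a b \ {t} ⊆ {t}ᶜ := fun u hu => hu.2
    rw [tendsto_order]
    constructor
    · intro l hl
      rcases lt_or_ge l 0 with hl0 | hl0
      · filter_upwards [self_mem_nhdsWithin] with s hs
        exact lt_of_lt_of_le hl0 (div_nonneg dist_nonneg (abs_nonneg _))
      · have hfin := (hcomp ht).1
        have hG1 : ENNReal.ofReal l < G t := by
          rw [ENNReal.ofReal_lt_iff_lt_toReal hl0 hfin]
          exact hl
        obtain ⟨n, hn⟩ := lt_iSup_iff.1
          (show ENNReal.ofReal l < ⨆ n, ENNReal.ofReal |deriv (φ n) t| from hG1)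
        have hl' : l < |deriv (φ n) t| :=
          (ENNReal.ofReal_lt_ofReal_iff_of_nonneg hl0).1 hn
        have hslope : Tendsto (fun s => |slope (φ n) t s|)
            (nhdsWithin t (Set.Ioo a b \ {t})) (nhds |deriv (φ n) t|) :=
          ((hasDerivAt_iff_tendsto_slope.1 (hdf n ht).hasDerivAt).mono_left
            (nhdsWithin_mono _ hsubset)).abs
        have hev2 := hslope.eventually (eventually_gt_nhds hl')
        filter_upwards [hev2, self_mem_nhdsWithin] with s hs1 hs2
        refine lt_of_lt_of_le hs1 ?_
        rw [slope_def_field, abs_div]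
        have hnum : |φ n s - φ n t| ≤ dist (c s) (c t) := by
          have h3 := abs_dist_sub_le (c s) (c t) (y n)
          rw [hφ_def]
          simpa using h3
        gcongr
    · intro v hv
      have hght : gh t = g t := Set.indicator_of_mem ht g
      have hGslope : Tendsto (slope Gh t) (nhdsWithin t (Set.Ioo a b \ {t})) (nhds (g t)) := by
        have := (hasDerivAt_iff_tendsto_slope.1 hGht).mono_left (nhdsWithin_mono _ hsubset)
        rwa [hght] at this
      have hev2 := hGslope.eventually (eventually_lt_nhds hv)
      filter_upwards [hev2, self_mem_nhdsWithin] with s hs1 hs2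
      refine lt_of_le_of_lt ?_ hs1
      have hsIoo : s ∈ Set.Ioo a b := hs2.1
      rcases lt_or_gt_of_ne (hs2.2 : s ≠ t) with h | h
      · have hd := hUG' s t hsIoo.1 h.le ht.2
        have heq : slope Gh t s = (Gh t - Gh s)/(t - s) := by
          rw [slope_def_field, show Gh s - Gh t = -(Gh t - Gh s) by ring,
            show s - t = -(t - s) by ring, neg_div_neg_eq]
        have habs : |s - t| = t - s := by
          rw [abs_sub_comm, abs_of_pos (by linarith : (0:ℝ) < t - s)]
        rw [heq, habs]
        exact div_le_div_of_nonneg_right hd (by linarith)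
      · have hd := hUG' t s ht.1 h.le hsIoo.2
        have habs : |s - t| = s - t := abs_of_pos (by linarith : (0:ℝ) < s - t)
        rw [slope_def_field, habs, dist_comm]
        exact div_le_div_of_nonneg_right hd (by linarith)
  · -- (iii) minimality
    intro m hmnn hmint hmub
    filter_upwards [ae_restrict_of_ae (hgle m hmnn hmint hmub),
      ae_restrict_mem measurableSet_Ioo] with t h1 h2
    exact h1 h2
end

section
/- Let (X,d) be a metric space and c : [a,b] → X a Lipschitz curve. Then the upper dilatation function t ↦ Lip(c)(t) is an upper gradient of c: for all a ≤ s ≤ t ≤ b one has d(c(s),c(t)) ≤ ∫_s^t Lip(c)(r) dr. In particular every Lipschitz curve into a complete metric space is absolutely continuous. -/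
open MeasureTheory Filter Set
open Topology

theorem lip_ftc {K : NNReal} {g : ℝ → ℝ} (hg : LipschitzWith K g)
    (s t : ℝ) (hst : s ≤ t) :
    ∃ g' : ℝ → ℝ, (∀ᵐ u, HasDerivAt g (g' u) u) ∧ IntegrableOn g' (Set.Ioc s t) ∧
      g t - g s ≤ ∫ u in Set.Ioc s t, g' u := by
  have hmono : Monotone (fun x => (K : ℝ) * x - g x) := by
    intro x y hxy
    have h := hg.dist_le_mul x y
    rw [Real.dist_eq, Real.dist_eq] at h
    rw [show |x - y| = y - x by rw [abs_sub_comm]; exact abs_of_nonneg (by linarith)] at h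
    have h2 := (abs_le.1 h).1
    simp only []
    linarith
  have hcont : Continuous (fun x => (K : ℝ) * x - g x) :=
    (continuous_const.mul continuous_id).sub hg.continuous
  set H : StieltjesFunction ℝ :=
    { toFun := fun x => (K : ℝ) * x - g x
      mono' := hmono
      right_continuous' := fun x => hcont.continuousWithinAt } with hH
  have hHfun : ∀ x, H x = (K : ℝ) * x - g x := fun x => rfl
  set d : ℝ → ℝ := fun x => (H.measure.rnDeriv volume x).toReal with hd
  have hder : ∀ᵐ x, HasDerivAt H (d x) x := H.ae_hasDerivAt
  refine ⟨fun x => (K : ℝ) - d x, ?_, ?_, ?_⟩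
  · filter_upwards [hder] with x hx
    have h3 := ((hasDerivAt_id x).const_mul (K : ℝ)).sub hx
    refine (h3.congr_of_eventuallyEq (Eventually.of_forall fun y => ?_)).congr_deriv (by ring)
    simp [hHfun]
  · have hbound : ∫⁻ x in Set.Ioc s t, H.measure.rnDeriv volume x ∂volume
        ≤ H.measure (Set.Ioc s t) := by
      rw [← withDensity_apply _ measurableSet_Ioc]
      exact Measure.le_iff'.1 (Measure.withDensity_rnDeriv_le _ _) _
    have hne : ∫⁻ x in Set.Ioc s t, H.measure.rnDeriv volume x ∂volume ≠ ⊤ :=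
      (hbound.trans_lt (by rw [H.measure_Ioc]; exact ENNReal.ofReal_lt_top)).ne
    have hdint : IntegrableOn d (Set.Ioc s t) :=
      integrable_toReal_of_lintegral_ne_top
        ((Measure.measurable_rnDeriv _ _).aemeasurable) hne
    exact (integrableOn_const (by rw [Real.volume_Ioc]; exact ENNReal.ofReal_ne_top)).sub hdint
  · have hbound : ∫⁻ x in Set.Ioc s t, H.measure.rnDeriv volume x ∂volume
        ≤ H.measure (Set.Ioc s t) := by
      rw [← withDensity_apply _ measurableSet_Ioc]
      exact Measure.le_iff'.1 (Measure.withDensity_rnDeriv_le _ _) _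
    have hne : ∫⁻ x in Set.Ioc s t, H.measure.rnDeriv volume x ∂volume ≠ ⊤ :=
      (hbound.trans_lt (by rw [H.measure_Ioc]; exact ENNReal.ofReal_lt_top)).ne
    have hdint : IntegrableOn d (Set.Ioc s t) :=
      integrable_toReal_of_lintegral_ne_top
        ((Measure.measurable_rnDeriv _ _).aemeasurable) hne
    have h1 : ∫ u in Set.Ioc s t, d u ≤ ((K : ℝ) * t - g t) - ((K : ℝ) * s - g s) := by
      rw [hd, integral_toReal ((Measure.measurable_rnDeriv _ _).aemeasurable)
        (ae_restrict_of_ae (Measure.rnDeriv_lt_top H.measure volume))]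
      have h2 : (H.measure (Set.Ioc s t)).toReal = ((K : ℝ) * t - g t) - ((K : ℝ) * s - g s) := by
        rw [H.measure_Ioc, ENNReal.toReal_ofReal (by have := hmono hst; simpa [hHfun] using this)]
      rw [← h2]
      exact ENNReal.toReal_mono (by rw [H.measure_Ioc]; exact ENNReal.ofReal_ne_top) hbound
    rw [integral_sub (integrableOn_const (C := (K : ℝ))
      (by rw [Real.volume_Ioc]; exact ENNReal.ofReal_ne_top)) hdint]
    rw [setIntegral_const, measureReal_def, Real.volume_Ioc, ENNReal.toReal_ofReal (by linarith), smul_eq_mul]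
    linarith

theorem ofReal_abs_deriv_le_upperDilatation {X : Type*} [MetricSpace X] {a b : ℝ} {c : ℝ → X}
    {g : ℝ → ℝ} {dv u : ℝ} (hu : u ∈ Set.Icc a b) (hub : u < b)
    (hslope : ∀ v ∈ Set.Icc a b, |g v - g u| ≤ dist (c v) (c u))
    (hderiv : HasDerivAt g dv u) :
    ENNReal.ofReal |dv| ≤ upperDilatation c (Set.Icc a b) u := by
  rw [upperDilatation]
  refine Filter.le_limsup_of_frequently_le ?_ (isBoundedUnder_of ⟨⊤, fun x => le_top⟩)
  refine (eventually_mem_nhdsWithin.mono ?_).frequently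
  intro ε hε
  simp only [Set.mem_Ioi] at hε
  refine ENNReal.le_of_forall_pos_le_add fun δ hδ _ => ?_
  have hT : Tendsto (slope g u) (𝓝[≠] u) (𝓝 dv) := hasDerivAt_iff_tendsto_slope.1 hderiv
  have hev : ∀ᶠ v in 𝓝[≠] u, |slope g u v - dv| < (δ : ℝ) := by
    have := Metric.tendsto_nhds.1 hT (δ : ℝ) (by exact_mod_cast hδ)
    simpa [Real.dist_eq] using this
  have hsub : 𝓝[>] u ≤ 𝓝[≠] u := nhdsWithin_mono u fun v hv => ne_of_gt hv
  have hmem : Set.Ioo u (min b (u + ε)) ∈ 𝓝[>] u :=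
    Ioo_mem_nhdsGT_of_mem ⟨le_refl u, lt_min hub (by linarith)⟩
  obtain ⟨v, hv1, hv2⟩ := ((hev.filter_mono hsub).and (eventually_of_mem hmem fun x hx => hx)).exists
  have hvu : u < v := hv2.1
  have hvb : v ≤ b := le_of_lt (lt_of_lt_of_le hv2.2 (min_le_left _ _))
  have hvε : v < u + ε := lt_of_lt_of_le hv2.2 (min_le_right _ _)
  have hvA : v ∈ Set.Icc a b ∩ Set.Ioo (u - ε) (u + ε) :=
    ⟨⟨hu.1.trans hvu.le, hvb⟩, ⟨by linarith, hvε⟩⟩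
  have huA : u ∈ Set.Icc a b ∩ Set.Ioo (u - ε) (u + ε) := ⟨hu, ⟨by linarith, by linarith⟩⟩
  have hne : v ≠ u := ne_of_gt hvu
  have habs : |slope g u v| ≤ dist (c v) (c u) / |v - u| := by
    rw [slope_def_field, abs_div]
    exact div_le_div_of_nonneg_right (hslope v hvA.1) (abs_nonneg _) 
  have h1 : |dv| ≤ dist (c v) (c u) / |v - u| + (δ : ℝ) := by
    have h2 : |dv| - |slope g u v| ≤ |slope g u v - dv| := by
      rw [abs_sub_comm]
      exact abs_sub_abs_le_abs_sub _ _
    linarith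
  calc ENNReal.ofReal |dv| ≤ ENNReal.ofReal (dist (c v) (c u) / |v - u| + (δ : ℝ)) :=
        ENNReal.ofReal_le_ofReal h1
    _ = ENNReal.ofReal (dist (c v) (c u) / |v - u|) + ENNReal.ofReal (δ : ℝ) :=
        ENNReal.ofReal_add (div_nonneg dist_nonneg (abs_nonneg _)) δ.coe_nonneg
    _ = edist (c v) (c u) / ENNReal.ofReal |v - u| + (δ : ENNReal) := by
        rw [ENNReal.ofReal_div_of_pos (abs_pos.2 (sub_ne_zero.2 hne)), edist_dist,
          ENNReal.ofReal_coe_nnreal]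
    _ ≤ _ + (δ : ENNReal) := by
        gcongr
        exact le_iSup_of_le v (le_iSup_of_le hvA (le_iSup_of_le u (le_iSup_of_le huA
          (le_iSup_of_le hne le_rfl))))

/-- For a Lipschitz curve `c : [a,b] → X` into a complete metric space, the upper
dilatation `t ↦ Lip(c)(t)` is an upper gradient of `c`:
`d(c(s),c(t)) ≤ ∫_s^t Lip(c)(r) dr` for all `a ≤ s ≤ t ≤ b`. In particular `c` is
absolutely continuous: it admits a nonnegative upper gradient `m ∈ L¹`. -/
theorem upperDilatation_is_upper_gradient {X : Type*} [MetricSpace X] [CompleteSpace X]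
    (a b : ℝ) (hab : a ≤ b) (c : ℝ → X) (K : NNReal)
    (hc : LipschitzOnWith K c (Set.Icc a b)) :
    (∀ s t : ℝ, a ≤ s → s ≤ t → t ≤ b →
      ENNReal.ofReal (dist (c s) (c t))
        ≤ ∫⁻ r in Set.Icc s t, upperDilatation c (Set.Icc a b) r) ∧
    ∃ m : ℝ → ℝ, (∀ r, 0 ≤ m r) ∧ IntegrableOn m (Set.Icc a b) ∧
      ∀ s t : ℝ, a ≤ s → s ≤ t → t ≤ b → dist (c s) (c t) ≤ ∫ r in s..t, m r := by
  constructor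
  · intro s t hs hst ht
    have hsI : s ∈ Set.Icc a b := ⟨hs, hst.trans ht⟩
    have htI : t ∈ Set.Icc a b := ⟨hs.trans hst, ht⟩
    have hf : LipschitzOnWith (1 * K) (fun u => dist (c s) (c u)) (Set.Icc a b) :=
      (LipschitzWith.dist_right (c s)).comp_lipschitzOnWith hc
    rw [one_mul] at hf
    obtain ⟨g, hg, hgf⟩ := hf.extend_real
    obtain ⟨g', hderiv, hint, hle⟩ := lip_ftc hg s t hst
    have haet : ∀ᵐ u : ℝ, u ≠ t := by
      refine ae_iff.2 ?_
      simp only [ne_eq, not_not, setOf_eq_eq_singleton]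
      exact measure_singleton t
    have hae : ∀ᵐ u ∂(volume.restrict (Set.Ioc s t)),
        ENNReal.ofReal |g' u| ≤ upperDilatation c (Set.Icc a b) u := by
      filter_upwards [ae_restrict_mem measurableSet_Ioc, ae_restrict_of_ae hderiv,
        ae_restrict_of_ae haet] with u hu h1 h2
      have huI : u ∈ Set.Icc a b := ⟨hs.trans hu.1.le, hu.2.trans ht⟩
      have hub : u < b := lt_of_lt_of_le (lt_of_le_of_ne hu.2 h2) ht
      refine ofReal_abs_deriv_le_upperDilatation huI hub (fun v hv => ?_) h1
      rw [← hgf hv, ← hgf huI]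
      calc |dist (c s) (c v) - dist (c s) (c u)|
          = |dist (c v) (c s) - dist (c u) (c s)| := by rw [dist_comm (c s) (c v), dist_comm (c s) (c u)]
        _ ≤ dist (c v) (c u) := abs_dist_sub_le _ _ _
    have hds : dist (c s) (c t) = g t - g s := by
      rw [← hgf htI, ← hgf hsI]
      simp
    calc ENNReal.ofReal (dist (c s) (c t))
        ≤ ENNReal.ofReal (∫ u in Set.Ioc s t, |g' u|) := by
          refine ENNReal.ofReal_le_ofReal ?_
          rw [hds]
          refine hle.trans ((le_abs_self _).trans ?_)
          simpa [Real.norm_eq_abs] using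
            norm_integral_le_integral_norm (μ := volume.restrict (Set.Ioc s t)) g' 
      _ = ∫⁻ u in Set.Ioc s t, ENNReal.ofReal |g' u| :=
          ofReal_integral_eq_lintegral_ofReal hint.abs (ae_of_all _ fun u => abs_nonneg _)
      _ ≤ ∫⁻ u in Set.Ioc s t, upperDilatation c (Set.Icc a b) u := lintegral_mono_ae hae
      _ ≤ ∫⁻ u in Set.Icc s t, upperDilatation c (Set.Icc a b) u :=
          lintegral_mono_set Set.Ioc_subset_Icc_self
  · refine ⟨fun _ => (K : ℝ), fun _ => K.coe_nonneg, ?_, ?_⟩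
    · exact integrableOn_const (by rw [Real.volume_Icc]; exact ENNReal.ofReal_ne_top)
    · intro s t hs hst ht
      rw [intervalIntegral.integral_const, smul_eq_mul]
      have h := hc.dist_le_mul s ⟨hs, hst.trans ht⟩ t ⟨hs.trans hst, ht⟩
      rw [Real.dist_eq, abs_sub_comm, abs_of_nonneg (by linarith)] at h
      linarith
end

section
/- Let θ ∈ ℝ with θ ≠ 0 and set z = 1 + iθ ∈ ℂ. Let c : [a,b] → ℂ be a Lipschitz curve such that for Lebesgue-almost every t ∈ [a,b) there exists w(t) ∈ ℂ with lim_{ε→0+} (1/ε)|c(t+ε) − c(t) − ε^z · w(t)| = 0, where ε^z = exp(z · log ε) for ε > 0. Then c is constant. -/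
open MeasureTheory Filter Set
open scoped Real Topology NNReal


private lemma exists_seqs (θ : ℝ) (hθ : θ ≠ 0) :
    ∃ k k' : ℕ → ℝ, (∀ n, 0 < k n) ∧ (∀ n, 0 < k' n) ∧
      Tendsto k atTop (𝓝 (0:ℝ)) ∧ Tendsto k' atTop (𝓝 (0:ℝ)) ∧
      (∀ n, Complex.exp (((θ * Real.log (k n) : ℝ) : ℂ) * Complex.I) = 1) ∧
      (∀ n, Complex.exp (((θ * Real.log (k' n) : ℝ) : ℂ) * Complex.I) = -1) := by
  set m : ℕ → ℤ := fun n => (if 0 < θ then -1 else 1) * (n + 1) with hm_def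
  have h1 : Tendsto (fun n : ℕ => ((n : ℝ) + 1)) atTop atTop :=
      tendsto_atTop_add_const_right _ 1 tendsto_natCast_atTop_atTop
  have hC : (2 * π * (if 0 < θ then (-1:ℝ) else 1)) / θ < 0 := by
    rcases hθ.lt_or_gt with hneg | hpos
    · rw [if_neg (not_lt.mpr hneg.le)]
      apply div_neg_of_pos_of_neg (by positivity) hneg
    · rw [if_pos hpos]
      apply div_neg_of_neg_of_pos (by nlinarith [Real.pi_pos]) hpos
  have hmdiv : Tendsto (fun n : ℕ => 2 * π * ((m n : ℝ)) / θ) atTop atBot := by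
    have key : Tendsto (fun n : ℕ =>
        ((2 * π * (if 0 < θ then (-1:ℝ) else 1)) / θ) * ((n : ℝ) + 1)) atTop atBot :=
      Filter.Tendsto.neg_mul_atTop hC tendsto_const_nhds h1
    refine key.congr fun n => ?_
    simp only [hm_def]
    split_ifs <;> (push_cast; ring)
  refine ⟨fun n => Real.exp (2 * π * (m n) / θ), fun n => Real.exp ((π + 2 * π * (m n)) / θ),
    fun n => Real.exp_pos _, fun n => Real.exp_pos _,
    Real.tendsto_exp_atBot.comp hmdiv, Real.tendsto_exp_atBot.comp ?_, fun n => ?_, fun n => ?_⟩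
  · have := tendsto_atBot_add_const_left atTop (π / θ) hmdiv
    refine this.congr fun n => ?_
    ring
  · rw [Real.log_exp, mul_div_cancel₀ _ hθ]
    have : (((2 * π * (m n) : ℝ)) : ℂ) * Complex.I = (m n : ℂ) * (2 * ↑π * Complex.I) := by
      push_cast; ring
    rw [this, Complex.exp_int_mul_two_pi_mul_I]
  · rw [Real.log_exp, mul_div_cancel₀ _ hθ]
    have : (((π + 2 * π * (m n) : ℝ)) : ℂ) * Complex.I
        = ↑π * Complex.I + (m n : ℂ) * (2 * ↑π * Complex.I) := by
      push_cast; ring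
    rw [this, Complex.exp_add, Complex.exp_int_mul_two_pi_mul_I, Complex.exp_pi_mul_I]
    ring

private lemma cpow_pos_eq (θ : ℝ) {ε : ℝ} (hε : 0 < ε) :
    (ε : ℂ) ^ ((1 : ℂ) + θ * Complex.I)
      = (ε : ℂ) * Complex.exp (((θ * Real.log ε : ℝ) : ℂ) * Complex.I) := by
  rw [Complex.cpow_def_of_ne_zero (by exact_mod_cast hε.ne'), ← Complex.ofReal_log hε.le,
    mul_add, mul_one, Complex.exp_add, ← Complex.ofReal_exp, Real.exp_log hε]
  push_cast
  ring_nf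

private lemma tendsto_quot (θ : ℝ) {u : ℝ → ℂ} {w χ : ℂ}
    (hland : Tendsto (fun ε : ℝ =>
        (1 / ε) * ‖u ε - (ε : ℂ) ^ ((1 : ℂ) + θ * Complex.I) * w‖)
      (𝓝[>] (0:ℝ)) (𝓝 0))
    (k : ℕ → ℝ) (hk0 : ∀ n, 0 < k n) (hk : Tendsto k atTop (𝓝 (0:ℝ)))
    (hχ : ∀ n, Complex.exp (((θ * Real.log (k n) : ℝ) : ℂ) * Complex.I) = χ) :
    Tendsto (fun n => u (k n) / (k n)) atTop (𝓝 (χ * w)) := by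
  have hk' : Tendsto k atTop (𝓝[>] (0:ℝ)) :=
    tendsto_nhdsWithin_of_tendsto_nhds_of_eventually_within _ hk
      (Eventually.of_forall fun n => hk0 n)
  have h1 := hland.comp hk'
  have h2 : ∀ n, (1 / (k n)) *
      ‖u (k n) - ((k n : ℝ) : ℂ) ^ ((1 : ℂ) + θ * Complex.I) * w‖
      = ‖u (k n) / (k n) - χ * w‖ := by
    intro n
    have hkn := hk0 n
    have hknC : ((k n : ℝ) : ℂ) ≠ 0 := by exact_mod_cast hkn.ne'
    rw [cpow_pos_eq θ hkn, hχ n]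
    rw [div_sub' hknC]
    rw [norm_div, Complex.norm_real, Real.norm_eq_abs, abs_of_pos hkn]
    rw [one_div, div_eq_inv_mul]
    ring_nf
  rw [tendsto_iff_norm_sub_tendsto_zero]
  refine Tendsto.congr (fun n => (h2 n)) h1


/-- For `z = 1 + iθ` with `θ ≠ 0`: any Lipschitz curve `c : [a,b] → ℂ` which at
almost every `t ∈ [a,b)` admits `w(t) ∈ ℂ` with
`(1/ε)|c(t+ε) − c(t) − ε^z w(t)| → 0` as `ε → 0+` must be constant.
(Here `ε^z = exp(z log ε)` is the complex power, via `Complex.cpow`.) -/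
theorem constant_of_dilatation_derivable (θ : ℝ) (hθ : θ ≠ 0)
    (a b : ℝ) (c : ℝ → ℂ) (K : NNReal) (hc : LipschitzOnWith K c (Set.Icc a b))
    (hder : ∀ᵐ t ∂(volume.restrict (Set.Ico a b)), ∃ w : ℂ,
      Filter.Tendsto
        (fun ε : ℝ =>
          (1 / ε) * ‖c (t + ε) - c t - (ε : ℂ) ^ ((1 : ℂ) + θ * Complex.I) * w‖)
        (nhdsWithin (0 : ℝ) (Set.Ioi 0)) (nhds 0)) :
    ∀ s ∈ Set.Icc a b, ∀ t ∈ Set.Icc a b, c s = c t := by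
  rcases le_or_gt b a with hba | hab
  · intro s hs t ht
    have h1 : s = t := le_antisymm (hs.2.trans (hba.trans ht.1)) (ht.2.trans (hba.trans hs.1))
    rw [h1]
  obtain ⟨g, hgL, hgeq⟩ := hc.extend_finite_dimension
  set M : ℝ := ((lipschitzExtensionConstant ℂ * K : ℝ≥0) : ℝ) with hM_def
  have hgnorm : ∀ x y : ℝ, ‖g x - g y‖ ≤ M * |x - y| := by
    intro x y
    have := hgL.dist_le_mul x y
    rwa [dist_eq_norm, Real.dist_eq] at this
  have hgcont : Continuous g := hgL.continuous
  obtain ⟨k, k', hk0, hk'0, hk, hk', hχ, hχ'⟩ := exists_seqs θ hθ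
  suffices key : ∀ s ∈ Icc a b, c s = c b by
    intro s hs t ht; rw [key s hs, key t ht]
  intro s hs
  rcases eq_or_lt_of_le hs.2 with hsb | hsb
  · rw [hsb]
  have hint : ∀ u v : ℝ, IntervalIntegrable g volume u v := fun u v =>
    hgcont.intervalIntegrable u v
  set G : ℝ → ℂ := fun x => ∫ u in (0:ℝ)..x, g u with hG_def
  have hGd : ∀ x : ℝ, HasDerivAt G (g x) x := fun x =>
    intervalIntegral.integral_hasDerivAt_right (hint 0 x)
      (hgcont.stronglyMeasurableAtFilter _ _) hgcont.continuousAt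
  have hGint : ∀ u v : ℝ, (∫ x in u..v, g x) = G v - G u := fun u v =>
    (intervalIntegral.integral_interval_sub_left (hint 0 v) (hint 0 u)).symm
  -- boundary limit
  have hbd : ∀ (x : ℝ) (q : ℕ → ℝ), (∀ n, 0 < q n) → Tendsto q atTop (𝓝 (0:ℝ)) →
      Tendsto (fun n => (G (x + q n) - G x) / ((q n : ℝ) : ℂ)) atTop (𝓝 (g x)) := by
    intro x q hq0 hq
    have hsl := hasDerivAt_iff_tendsto_slope.mp (hGd x)
    have hmap : Tendsto (fun n => x + q n) atTop (𝓝[≠] x) := by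
      apply tendsto_nhdsWithin_of_tendsto_nhds_of_eventually_within
      · simpa using tendsto_const_nhds.add hq
      · exact Eventually.of_forall fun n => by simp [(hq0 n).ne']
    have := hsl.comp hmap
    refine this.congr fun n => ?_
    simp only [Function.comp_apply, slope_def_module]
    rw [add_sub_cancel_left, Complex.real_smul, Complex.ofReal_inv, div_eq_inv_mul]
  -- integral identity
  have hid : ∀ h : ℝ, 0 < h →
      (∫ x in s..b, (g (x + h) - g x) / ((h : ℝ) : ℂ))
        = (G (b + h) - G b) / (h : ℂ) - (G (s + h) - G s) / (h : ℂ) := by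
    intro h hh
    have hint2 : IntervalIntegrable (fun x => g (x + h)) volume s b :=
      (hgcont.comp (continuous_id.add continuous_const)).intervalIntegrable s b
    rw [intervalIntegral.integral_div, intervalIntegral.integral_sub hint2 (hint s b)]
    rw [intervalIntegral.integral_comp_add_right (fun x => g x) h]
    rw [hGint (s + h) (b + h), hGint s b]
    rw [← sub_div]
    ring_nf
  set F : ℕ → ℝ → ℂ := fun n x =>
    (g (x + k n) - g x) / ((k n : ℝ) : ℂ) + (g (x + k' n) - g x) / ((k' n : ℝ) : ℂ) with hF_def
  have hFcont : ∀ n, Continuous (F n) := by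
    intro n
    apply Continuous.add <;>
      exact ((hgcont.comp (continuous_id.add continuous_const)).sub hgcont).div_const _
  have hΦid : ∀ n, (∫ x in s..b, F n x)
      = ((G (b + k n) - G b) / (k n : ℂ) - (G (s + k n) - G s) / (k n : ℂ))
        + ((G (b + k' n) - G b) / (k' n : ℂ) - (G (s + k' n) - G s) / (k' n : ℂ)) := by
    intro n
    have hi1 : IntervalIntegrable (fun x => (g (x + k n) - g x) / ((k n : ℝ) : ℂ)) volume s b := by
      apply Continuous.intervalIntegrable; fun_prop
    have hi2 : IntervalIntegrable (fun x => (g (x + k' n) - g x) / ((k' n : ℝ) : ℂ)) volume s b := by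
      apply Continuous.intervalIntegrable; fun_prop
    simp only [hF_def]
    rw [intervalIntegral.integral_add hi1 hi2]
    rw [hid (k n) (hk0 n), hid (k' n) (hk'0 n)]
  have hΦlim : Tendsto (fun n => ∫ x in s..b, F n x) atTop (𝓝 ((g b - g s) + (g b - g s))) := by
    have h1 := (hbd b k hk0 hk).sub (hbd s k hk0 hk)
    have h2 := (hbd b k' hk'0 hk').sub (hbd s k' hk'0 hk')
    exact (h1.add h2).congr fun n => (hΦid n).symm
  have hb0 : (volume.restrict (Ioc s b)) {b} = 0 := by
    apply le_antisymm _ (zero_le)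
    calc (volume.restrict (Ioc s b)) {b} ≤ volume {b} := Measure.restrict_apply_le _ _
      _ = 0 := Real.volume_singleton
  have hqb : ∀ (h : ℝ), 0 < h → ∀ x : ℝ, ‖(g (x + h) - g x) / ((h : ℝ) : ℂ)‖ ≤ M := by
    intro h hh x
    rw [norm_div, Complex.norm_real, Real.norm_eq_abs, abs_of_pos hh, div_le_iff₀ hh]
    have := hgnorm (x + h) x
    simpa [abs_of_pos hh] using this
  have hΦ0 : Tendsto (fun n => ∫ x in s..b, F n x) atTop (𝓝 0) := by
    have heq : ∀ n, (∫ x in s..b, F n x) = ∫ x in Ioc s b, F n x := fun n =>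
      intervalIntegral.integral_of_le hsb.le
    rw [tendsto_congr heq]
    have hmeas : ∀ n, AEStronglyMeasurable (F n) (volume.restrict (Ioc s b)) := fun n =>
      (hFcont n).aestronglyMeasurable
    have hbint : Integrable (fun _ : ℝ => 2 * M) (volume.restrict (Ioc s b)) := by
      apply (integrableOn_const_iff (C := (2 * M : ℝ))).mpr
      right; exact measure_Ioc_lt_top
    have hbound : ∀ n, ∀ᵐ x ∂(volume.restrict (Ioc s b)), ‖F n x‖ ≤ 2 * M := by
      intro n
      apply Eventually.of_forall
      intro x
      calc ‖F n x‖ ≤ ‖(g (x + k n) - g x) / ((k n : ℝ) : ℂ)‖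
            + ‖(g (x + k' n) - g x) / ((k' n : ℝ) : ℂ)‖ := norm_add_le _ _
        _ ≤ M + M := add_le_add (hqb _ (hk0 n) x) (hqb _ (hk'0 n) x)
        _ = 2 * M := by ring
    have hlim : ∀ᵐ x ∂(volume.restrict (Ioc s b)),
        Tendsto (fun n => F n x) atTop (𝓝 0) := by
      have hae1 := ae_restrict_of_ae (μ := volume) (s := Ioc s b)
        (ae_imp_of_ae_restrict hder)
      have hae2 : ∀ᵐ x ∂(volume.restrict (Ioc s b)), x ∈ Ioc s b :=
        ae_restrict_mem measurableSet_Ioc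
      have hae3 : ∀ᵐ x ∂(volume.restrict (Ioc s b)), x ≠ b := by
        rw [ae_iff]
        convert hb0 using 2
        ext x; simp
      filter_upwards [hae1, hae2, hae3] with x hP hmem hne
      have hxI : x ∈ Ico a b := ⟨hs.1.trans hmem.1.le, lt_of_le_of_ne hmem.2 hne⟩
      obtain ⟨w, hw⟩ := hP hxI
      have hmem' : Ioo (0:ℝ) (b - x) ∈ 𝓝[>] (0:ℝ) :=
        Ioo_mem_nhdsGT_of_mem ⟨le_refl 0, sub_pos.mpr hxI.2⟩
      have hw' : Tendsto (fun ε : ℝ => (1 / ε) * ‖(fun ε : ℝ => g (x + ε) - g x) ε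
          - (ε : ℂ) ^ ((1 : ℂ) + θ * Complex.I) * w‖) (𝓝[>] (0:ℝ)) (𝓝 0) := by
        refine hw.congr' ?_
        filter_upwards [hmem'] with ε hε
        rw [hgeq (show x ∈ Icc a b from ⟨hxI.1, hxI.2.le⟩),
          hgeq (show x + ε ∈ Icc a b from ⟨by linarith [hxI.1, hε.1], by linarith [hε.2]⟩)]
      have t1 := tendsto_quot θ hw' k hk0 hk hχ
      have t2 := tendsto_quot θ hw' k' hk'0 hk' hχ'
      have t3 := t1.add t2
      have : (1 : ℂ) * w + (-1 : ℂ) * w = 0 := by ring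
      rw [this] at t3
      exact t3
    have hdct := tendsto_integral_of_dominated_convergence (μ := volume.restrict (Ioc s b))
      (F := fun n x => F n x) (f := fun _ => (0 : ℂ)) (fun _ => 2 * M) hmeas hbint hbound hlim
    simpa using hdct
  have h2 : (g b - g s) + (g b - g s) = 0 := tendsto_nhds_unique hΦlim hΦ0
  have h3 : g b = g s := by
    have h4 : g b - g s = 0 := by
      have := add_self_eq_zero.mp h2
      exact this
    exact sub_eq_zero.mp h4
  rw [hgeq hs, hgeq (show b ∈ Icc a b from ⟨hab.le, le_refl b⟩), h3]
end

section
/- Let θ ∈ ℝ with θ ≠ 0, set z = 1 + iθ ∈ ℂ and ε^z = exp(z · log ε) for ε > 0. Then for every u ∈ ℂ with u ≠ 0 there is no w ∈ ℂ such that lim_{ε→0+} (1/ε)·|conj(ε^z · u) − ε^z · w| = 0, where conj denotes complex conjugation. In particular, the complex conjugation map (a C^∞ but non-holomorphic Lipschitz map of ℝ² = ℂ) is nowhere differentiable with respect to the dilatation structure δ^x_ε y = x + ε^z (y − x). -/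
open Filter Set Complex Real

lemma keyA (θ t : ℝ) (u w : ℂ) :
    (1 / Real.exp t) * ‖
      ((starRingEnd ℂ) ((Real.exp t : ℂ) ^ ((1 : ℂ) + θ * Complex.I) * u)
        - (Real.exp t : ℂ) ^ ((1 : ℂ) + θ * Complex.I) * w)‖
    = ‖(starRingEnd ℂ) u - Complex.exp (2 * θ * t * Complex.I) * w‖ := by
  have hpow : (Real.exp t : ℂ) ^ ((1 : ℂ) + θ * Complex.I)
      = Complex.exp t * Complex.exp (θ * t * Complex.I) := by
    rw [Complex.cpow_def_of_ne_zero (by exact_mod_cast (Real.exp_pos t).ne'),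
      ← Complex.ofReal_log (Real.exp_pos t).le, Real.log_exp, ← Complex.exp_add]
    ring_nf
  have hconj : (starRingEnd ℂ) ((Real.exp t : ℂ) ^ ((1 : ℂ) + θ * Complex.I) * u)
      = Complex.exp t * Complex.exp (-(θ * t * Complex.I)) * (starRingEnd ℂ) u := by
    rw [hpow, map_mul, map_mul, ← Complex.exp_conj, ← Complex.exp_conj]
    simp [Complex.conj_I]
  have hmul : Complex.exp (-(↑θ * ↑t * Complex.I)) * Complex.exp (2 * ↑θ * ↑t * Complex.I)
      = Complex.exp (↑θ * ↑t * Complex.I) := by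
    rw [← Complex.exp_add]; ring_nf
  have hfac : Complex.exp ↑t * Complex.exp (-(↑θ * ↑t * Complex.I)) * (starRingEnd ℂ) u
      - Complex.exp ↑t * Complex.exp (↑θ * ↑t * Complex.I) * w
      = Complex.exp ↑t * Complex.exp (-(↑θ * ↑t * Complex.I)) *
        ((starRingEnd ℂ) u - Complex.exp (2 * ↑θ * ↑t * Complex.I) * w) := by
    rw [← hmul]; ring
  rw [hconj, hpow, hfac, norm_mul, norm_mul, Complex.norm_exp, Complex.norm_exp]
  have h1 : (↑t : ℂ).re = t := by simp
  have h2 : (-(↑θ * ↑t * Complex.I)).re = 0 := by simp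
  rw [h1, h2, Real.exp_zero, mul_one, ← mul_assoc, one_div,
    inv_mul_cancel₀ (Real.exp_ne_zero t), one_mul]

/-- For `z = 1 + iθ` with `θ ≠ 0` and any `u ≠ 0`, there is no `w ∈ ℂ` such that
`(1/ε)|conj(ε^z u) − ε^z w| → 0` as `ε → 0+`; hence complex conjugation (a `C^∞`
but non-holomorphic Lipschitz map of `ℝ² = ℂ`) is nowhere differentiable with
respect to the dilatation structure `δ^x_ε y = x + ε^z (y − x)`.
(Here `ε^z = exp(z log ε)` is the complex power, via `Complex.cpow`.) -/
theorem conj_not_dilatation_differentiable (θ : ℝ) (hθ : θ ≠ 0)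
    (u : ℂ) (hu : u ≠ 0) :
    ¬ ∃ w : ℂ, Filter.Tendsto
      (fun ε : ℝ =>
        (1 / ε) * ‖
          ((starRingEnd ℂ) ((ε : ℂ) ^ ((1 : ℂ) + θ * Complex.I) * u)
            - (ε : ℂ) ^ ((1 : ℂ) + θ * Complex.I) * w)‖)
      (nhdsWithin (0 : ℝ) (Set.Ioi 0)) (nhds 0) := by
  rintro ⟨w, hw⟩
  have key : ∀ (t : ℕ → ℝ), Tendsto t atTop atBot → ∀ c : ℂ,
      (∀ n, Complex.exp (2 * θ * t n * Complex.I) = c) →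
      ‖(starRingEnd ℂ) u - c * w‖ = 0 := by
    intro t ht c hc
    have hexp : Tendsto (fun n => Real.exp (t n)) atTop (nhdsWithin (0:ℝ) (Set.Ioi 0)) := by
      apply tendsto_nhdsWithin_of_tendsto_nhds_of_eventually_within
      · exact Real.tendsto_exp_atBot.comp ht
      · exact Eventually.of_forall fun n => Real.exp_pos _
    have hcomp := hw.comp hexp
    have heq : ((fun ε : ℝ =>
        (1 / ε) * ‖
          ((starRingEnd ℂ) ((ε : ℂ) ^ ((1 : ℂ) + θ * Complex.I) * u)
            - (ε : ℂ) ^ ((1 : ℂ) + θ * Complex.I) * w)‖) ∘ fun n => Real.exp (t n))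
        = fun _ : ℕ => ‖(starRingEnd ℂ) u - c * w‖ := by
      funext n
      simp only [Function.comp_apply]
      rw [keyA, hc n]
    rw [heq] at hcomp
    exact tendsto_nhds_unique tendsto_const_nhds hcomp
  have hπ := Real.pi_pos
  set m : ℤ := if 0 < θ then -1 else 1 with hm
  have hσ : (m : ℝ) * (2 * π / θ) < 0 := by
    rcases hθ.lt_or_gt with hneg | hpos
    · rw [hm, if_neg (not_lt.mpr hneg.le)]
      push_cast
      rw [one_mul]
      exact div_neg_of_pos_of_neg (by positivity) hneg
    · rw [hm, if_pos hpos]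
      push_cast
      have : 0 < 2 * π / θ := by positivity
      nlinarith
  have hθc : (θ : ℂ) ≠ 0 := by exact_mod_cast hθ
  -- first sequence: exp factor 1
  have h1 : ‖(starRingEnd ℂ) u - 1 * w‖ = 0 := by
    refine key (fun n => (n : ℝ) * ((m : ℝ) * (2 * π / θ))) ?_ 1 ?_
    · exact (tendsto_natCast_atTop_atTop).atTop_mul_const_of_neg hσ
    · intro n
      have : Complex.exp (2 * θ * (((n : ℝ) * ((m : ℝ) * (2 * π / θ))) : ℝ) * Complex.I)
          = Complex.exp (((2 * m * n : ℤ) : ℂ) * (2 * π * Complex.I)) := by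
        congr 1
        push_cast
        field_simp
      rw [this, Complex.exp_int_mul_two_pi_mul_I]
  -- second sequence: exp factor -1
  have h2 : ‖(starRingEnd ℂ) u - (-1) * w‖ = 0 := by
    refine key (fun n => (n : ℝ) * ((m : ℝ) * (2 * π / θ)) + π / (2 * θ)) ?_ (-1) ?_
    · exact tendsto_atBot_add_const_right _ _
        ((tendsto_natCast_atTop_atTop).atTop_mul_const_of_neg hσ)
    · intro n
      have : Complex.exp (2 * θ * (((n : ℝ) * ((m : ℝ) * (2 * π / θ)) + π / (2 * θ)) : ℝ) * Complex.I)
          = Complex.exp (((2 * m * n : ℤ) : ℂ) * (2 * π * Complex.I) + π * Complex.I) := by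
        congr 1
        push_cast
        field_simp
      rw [this, Complex.exp_add, Complex.exp_int_mul_two_pi_mul_I, Complex.exp_pi_mul_I, one_mul]
  rw [norm_eq_zero, sub_eq_zero, one_mul] at h1
  rw [norm_eq_zero, sub_eq_zero, neg_one_mul] at h2
  apply hu
  rw [h1] at h2
  have hw0 : w = 0 := by linear_combination h2 / 2
  rw [hw0] at h1
  have := congrArg (starRingEnd ℂ) h1
  simpa using this
end

section
/- Let X be a set equipped with two metrics d_A and d_B such that d_B(x,y) ≤ d_A(x,y) for all x,y ∈ X, such that (X,d_A) and (X,d_B) are complete metric spaces, and such that every d_A-Lipschitz curve has equal variations with respect to the two metrics: Var_A(f) = Var_B(f) for every d_A-Lipschitz f : [s,t] → X. Then for every d_A-Lipschitz curve c : [a,b] → X and Lebesgue-almost every t ∈ (a,b), the metric derivative of c at t with respect to d_A exists, the metric derivative of c at t with respect to d_B exists, and the two are equal; equivalently, lim_{ε→0+} (1/ε)·( d_A(c(t+ε), c(t)) − d_B(c(t+ε), c(t)) ) = 0 for a.e. t. -/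
open MeasureTheory Filter Set Topology

/-- The variation (in `ℝ≥0∞`) of `f : ℝ → X` on a set `s ⊆ ℝ`, computed with respect
to a distance function `d : X → X → ℝ`:
`sup { Σ_i d(f(t_{i+1}), f(t_i)) : t monotone sequence in s }`. -/
noncomputable def eVarWith {X : Type*} (d : X → X → ℝ) (f : ℝ → X) (s : Set ℝ) : ENNReal :=
  ⨆ p : ℕ × { u : ℕ → ℝ // Monotone u ∧ ∀ i, u i ∈ s },
    ∑ i ∈ Finset.range p.1,
      ENNReal.ofReal (d (f ((p.2 : ℕ → ℝ) (i + 1))) (f ((p.2 : ℕ → ℝ) i)))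

lemma eVarWith_eq_eVariationOn {X : Type*} [MetricSpace X] (f : ℝ → X) (s : Set ℝ) :
    eVarWith dist f s = eVariationOn f s := by
  unfold eVarWith eVariationOn
  congr 1
  funext p
  refine Finset.sum_congr rfl fun i _ => ?_
  rw [edist_dist]

lemma abs_deriv_le_of_lipschitzWith {f : ℝ → ℝ} {K : NNReal} (hf : LipschitzWith K f) (t : ℝ) :
    |deriv f t| ≤ K := by
  have h1 : ‖fderiv ℝ f t‖ ≤ K := norm_fderiv_le_of_lipschitz ℝ hf
  have h2 : deriv f t = fderiv ℝ f t 1 := by rw [← fderiv_apply_one_eq_deriv]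
  calc |deriv f t| = ‖fderiv ℝ f t 1‖ := by rw [h2]; rfl
    _ ≤ ‖fderiv ℝ f t‖ * ‖(1:ℝ)‖ := (fderiv ℝ f t).le_opNorm 1
    _ ≤ K := by simpa using h1

lemma mono_cont_integral_deriv_le {g : ℝ → ℝ} (hg : Monotone g) (hcont : Continuous g)
    {u v : ℝ} (huv : u ≤ v) :
    ∫ t in Icc u v, deriv g t ≤ g v - g u := by
  have hae : ∀ᵐ t : ℝ, deriv g t
      = (Measure.rnDeriv hg.stieltjesFunction.measure volume t).toReal :=
    hg.ae_hasDerivAt.mono fun t ht => ht.deriv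
  have hst : hg.stieltjesFunction = g := by
    ext x
    rw [hg.stieltjesFunction_eq]
    exact rightLim_eq_of_tendsto
      ((hcont.tendsto x).mono_left nhdsWithin_le_nhds)
  have hIcc : hg.stieltjesFunction.measure (Icc u v) = ENNReal.ofReal (g v - g u) := by
    rw [StieltjesFunction.measure_Icc]
    congr 1
    have hl : Function.leftLim (hg.stieltjesFunction : ℝ → ℝ) u = g u := by
      rw [hst]
      exact leftLim_eq_of_tendsto
        ((hcont.tendsto u).mono_left nhdsWithin_le_nhds)
    rw [hl, hst]
  calc ∫ t in Icc u v, deriv g t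
      = ∫ t in Icc u v, (Measure.rnDeriv hg.stieltjesFunction.measure volume t).toReal :=
        integral_congr_ae (ae_restrict_of_ae hae)
    _ ≤ (hg.stieltjesFunction.measure (Icc u v)).toReal :=
        Measure.setIntegral_toReal_rnDeriv_le (by rw [hIcc]; exact ENNReal.ofReal_ne_top)
    _ = g v - g u := by rw [hIcc, ENNReal.toReal_ofReal (by linarith [hg huv])]

lemma lip_ftc_sided {f : ℝ → ℝ} {K : NNReal} (hf : LipschitzWith K f)
    {u v : ℝ} (huv : u ≤ v) (σ : ℝ) (hσ : |σ| = 1) :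
    σ * (∫ t in Icc u v, deriv f t) ≤ σ * (f v - f u) := by
  have hdiff : ∀ᵐ t : ℝ, DifferentiableAt ℝ f t := hf.ae_differentiableAt_real
  set g : ℝ → ℝ := fun t => σ * f t + K * t with hgdef
  have hfle : ∀ s t : ℝ, s ≤ t → |f t - f s| ≤ K * (t - s) := by
    intro s t hst
    have := hf.dist_le_mul t s
    rwa [Real.dist_eq, Real.dist_eq, abs_of_nonneg (by linarith : (0:ℝ) ≤ t - s)] at this
  have hgmono : Monotone g := by
    intro s t hst
    have h1 := hfle s t hst
    have h3 : |σ * (f t - f s)| = |f t - f s| := by rw [abs_mul, hσ, one_mul]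
    have h2 : -(K*(t-s)) ≤ σ * (f t - f s) := by
      have h4 := neg_abs_le (σ * (f t - f s))
      rw [h3] at h4; linarith
    simp only [hgdef]; nlinarith
  have hgcont : Continuous g :=
    ((continuous_const.mul hf.continuous).add (continuous_const.mul continuous_id))
  have hder : ∀ᵐ t : ℝ, deriv g t = σ * deriv f t + K := by
    filter_upwards [hdiff] with t ht
    have h5 : HasDerivAt g (σ * deriv f t + (K:ℝ) * 1) t :=
      (ht.hasDerivAt.const_mul σ).add ((hasDerivAt_id t).const_mul (K:ℝ))
    simpa using h5.deriv
  have hint : IntegrableOn (deriv f) (Icc u v) volume :=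
    Measure.integrableOn_of_bounded measure_Icc_lt_top.ne
      (measurable_deriv f).aestronglyMeasurable
      (ae_of_all _ (abs_deriv_le_of_lipschitzWith hf))
  have h1 : ∫ t in Icc u v, deriv g t ≤ g v - g u := mono_cont_integral_deriv_le hgmono hgcont huv
  rw [integral_congr_ae (ae_restrict_of_ae hder)] at h1
  rw [integral_add (hint.const_mul σ) (integrableOn_const measure_Icc_lt_top.ne),
      integral_const, integral_const_mul, measureReal_restrict_apply_univ, measureReal_def, Real.volume_Icc,
      smul_eq_mul, ENNReal.toReal_ofReal (by linarith : (0:ℝ) ≤ v - u)] at h1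
  simp only [hgdef] at h1
  linarith

lemma lip_integral_deriv_eq {f : ℝ → ℝ} {K : NNReal} (hf : LipschitzWith K f)
    {u v : ℝ} (huv : u ≤ v) :
    ∫ t in Icc u v, deriv f t = f v - f u := by
  have hp := lip_ftc_sided hf huv 1 (by norm_num)
  have hm := lip_ftc_sided hf huv (-1) (by norm_num)
  simp only [one_mul, neg_mul, neg_le_neg_iff] at hp hm
  linarith

lemma core {X Y : Type*} [MetricSpace X] [MetricSpace Y] (φ : X → Y)
    (hφ : ∀ x y : X, dist (φ x) (φ y) ≤ dist x y)
    (c : ℝ → X) (K : NNReal) (hc : LipschitzWith K c)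
    (hvar : ∀ u v : ℝ, eVariationOn c (Icc u v) = eVariationOn (φ ∘ c) (Icc u v)) :
    ∀ᵐ t : ℝ, ∃ L : ℝ,
      Tendsto (fun s => dist (c s) (c t) / |s - t|) (𝓝[≠] t) (𝓝 L) ∧
      Tendsto (fun s => dist (φ (c s)) (φ (c t)) / |s - t|) (𝓝[≠] t) (𝓝 L) := by
  -- the second curve
  set g : ℝ → X → Y := fun _ x => φ x with hgdef  -- dummy to avoid name clash; not used
  clear hgdef g
  have hφl : LipschitzWith 1 φ := LipschitzWith.of_dist_le_mul (fun x y => by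
    simpa using hφ x y)
  have hg : LipschitzWith K (φ ∘ c) := by simpa using hφl.comp hc
  set G : ℝ → Y := φ ∘ c with hGdef
  have hGc : ∀ s t : ℝ, dist (G s) (G t) ≤ dist (c s) (c t) := fun s t => hφ _ _
  have hlbv : LocallyBoundedVariationOn c univ := hc.locallyBoundedVariationOn univ
  have evar_fin : ∀ u v : ℝ, eVariationOn c (Icc u v) ≠ ⊤ := by
    intro u v
    have := hlbv u v (mem_univ u) (mem_univ v)
    rwa [univ_inter] at this
  set V : ℝ → ℝ := variationOnFromTo c univ 0 with hVdef
  have V1 : ∀ u v : ℝ, u ≤ v → V v - V u = (eVariationOn c (Icc u v)).toReal := by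
    intro u v huv
    have := variationOnFromTo.add hlbv (mem_univ 0) (mem_univ u) (mem_univ v)
    have h2 : variationOnFromTo c univ u v = (eVariationOn c (Icc u v)).toReal := by
      rw [variationOnFromTo.eq_of_le c univ huv, univ_inter]
    simp only [hVdef]
    rw [← this, h2]; ring
  have Vmono : Monotone V := by
    rw [hVdef, ← monotoneOn_univ]
    exact variationOnFromTo.monotoneOn hlbv (mem_univ 0)
  have evar_le : ∀ u v : ℝ, u ≤ v → eVariationOn c (Icc u v) ≤ ENNReal.ofReal (K * (v - u)) := by
    intro u v huv
    have h1 : eVariationOn (c ∘ id) (Icc u v) ≤ K * eVariationOn (id : ℝ → ℝ) (Icc u v) :=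
      hc.lipschitzOnWith.comp_eVariationOn_le (mapsTo_univ _ _)
    have h2 : eVariationOn (id : ℝ → ℝ) (Icc u v) ≤ ENNReal.ofReal (v - u) := by
      have := (monotoneOn_id (s := Icc u v)).eVariationOn_le
        (left_mem_Icc.2 huv) (right_mem_Icc.2 huv)
      rwa [inter_self] at this
    calc eVariationOn c (Icc u v) = eVariationOn (c ∘ id) (Icc u v) := by rfl
      _ ≤ K * eVariationOn (id : ℝ → ℝ) (Icc u v) := h1
      _ ≤ K * ENNReal.ofReal (v - u) := mul_le_mul_right h2 _
      _ = ENNReal.ofReal (K * (v - u)) := by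
          rw [ENNReal.ofReal_mul K.coe_nonneg, ENNReal.ofReal_coe_nnreal]
  have Vincr_le : ∀ u v : ℝ, u ≤ v → V v - V u ≤ K * (v - u) := by
    intro u v huv
    rw [V1 u v huv]
    have := ENNReal.toReal_mono ENNReal.ofReal_ne_top (evar_le u v huv)
    rwa [ENNReal.toReal_ofReal (mul_nonneg K.coe_nonneg (by linarith))] at this
  have hVlip : LipschitzWith K V := by
    apply LipschitzWith.of_dist_le_mul
    intro x y
    rw [Real.dist_eq, Real.dist_eq]
    rcases le_total x y with h | h
    · rw [abs_of_nonpos (by linarith [Vmono h]), abs_of_nonpos (by linarith)]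
      have := Vincr_le x y h; linarith
    · rw [abs_of_nonneg (by linarith [Vmono h]), abs_of_nonneg (by linarith)]
      have := Vincr_le y x h; linarith
  have distc_le : ∀ u v : ℝ, u ≤ v → dist (c u) (c v) ≤ V v - V u := by
    intro u v huv
    rw [V1 u v huv, dist_edist]
    exact ENNReal.toReal_mono (evar_fin u v)
      (eVariationOn.edist_le c (left_mem_Icc.2 huv) (right_mem_Icc.2 huv))
  have distG_le : ∀ u v : ℝ, u ≤ v → dist (G u) (G v) ≤ V v - V u := by
    intro u v huv
    rw [V1 u v huv, dist_edist, hvar u v]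
    exact ENNReal.toReal_mono (by rw [← hvar u v]; exact evar_fin u v)
      (eVariationOn.edist_le G (left_mem_Icc.2 huv) (right_mem_Icc.2 huv))
  have distc_le' : ∀ s t : ℝ, dist (c s) (c t) ≤ |V s - V t| := by
    intro s t
    rcases le_total s t with h | h
    · rw [abs_of_nonpos (by linarith [Vmono h])]
      have := distc_le s t h; linarith
    · rw [abs_of_nonneg (by linarith [Vmono h])]
      have := distc_le t s h; rw [dist_comm] at this; linarith
  -- countable family of comparison functions
  set fq : ℚ → ℝ → ℝ := fun q t => dist (G t) (G (q : ℝ)) with hfqdef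
  have hfqlip : ∀ q : ℚ, LipschitzWith K (fq q) := by
    intro q
    apply LipschitzWith.of_dist_le_mul
    intro x y
    calc dist (fq q x) (fq q y) = |dist (G x) (G (q:ℝ)) - dist (G y) (G (q:ℝ))| :=
          Real.dist_eq _ _
      _ ≤ dist (G x) (G y) := abs_dist_sub_le _ _ _
      _ ≤ dist (c x) (c y) := hGc x y
      _ ≤ K * dist x y := hc.dist_le_mul x y
  set mE : ℝ → ENNReal := fun t => ⨆ q : ℚ, ENNReal.ofReal |deriv (fq q) t| with hmEdef
  have hmE_le : ∀ t, mE t ≤ ENNReal.ofReal K := fun t =>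
    iSup_le fun q => ENNReal.ofReal_le_ofReal (abs_deriv_le_of_lipschitzWith (hfqlip q) t)
  have hmE_ne_top : ∀ t, mE t ≠ ⊤ := fun t => ((hmE_le t).trans_lt ENNReal.ofReal_lt_top).ne
  set m : ℝ → ℝ := fun t => (mE t).toReal with hmdef
  have m_nonneg : ∀ t, 0 ≤ m t := fun t => ENNReal.toReal_nonneg
  have m_le : ∀ t, m t ≤ K := by
    intro t
    have := ENNReal.toReal_mono ENNReal.ofReal_ne_top (hmE_le t)
    rwa [ENNReal.toReal_ofReal K.coe_nonneg] at this
  have m_ge : ∀ (q : ℚ) (t : ℝ), |deriv (fq q) t| ≤ m t := by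
    intro q t
    have h1 : ENNReal.ofReal |deriv (fq q) t| ≤ mE t :=
      le_iSup (fun q => ENNReal.ofReal |deriv (fq q) t|) q
    have := ENNReal.toReal_mono (hmE_ne_top t) h1
    rwa [ENNReal.toReal_ofReal (abs_nonneg _)] at this
  have m_meas : Measurable m := by
    apply Measurable.ennreal_toReal
    exact Measurable.iSup (fun q => ((measurable_deriv (fq q)).abs).ennreal_ofReal)
  have m_int : ∀ u v : ℝ, IntegrableOn m (Icc u v) volume := fun u v =>
    Measure.integrableOn_of_bounded measure_Icc_lt_top.ne
      m_meas.aestronglyMeasurable (ae_of_all _ (fun t => by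
        rw [Real.norm_eq_abs, abs_of_nonneg (m_nonneg t)]; exact m_le t))
  have dq_int : ∀ (q : ℚ) (u v : ℝ), IntegrableOn (deriv (fq q)) (Icc u v) volume :=
    fun q u v => Measure.integrableOn_of_bounded measure_Icc_lt_top.ne
      (measurable_deriv (fq q)).aestronglyMeasurable
      (ae_of_all _ (fun t => by
        rw [Real.norm_eq_abs]; exact abs_deriv_le_of_lipschitzWith (hfqlip q) t))
  have KEY1 : ∀ u v : ℝ, u ≤ v → dist (G u) (G v) ≤ ∫ t in Icc u v, m t := by
    intro u v huv
    refine le_of_forall_pos_le_add (fun ε hε => ?_)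
    obtain ⟨q, hq⟩ := exists_rat_near u (show (0:ℝ) < ε / (2 * ((K:ℝ) + 1)) by positivity)
    have h1 : fq q u ≤ ε / 2 := by
      calc fq q u = dist (G u) (G (q:ℝ)) := rfl
        _ ≤ dist (c u) (c (q:ℝ)) := hGc _ _
        _ ≤ K * dist u (q:ℝ) := hc.dist_le_mul _ _
        _ = K * |u - (q:ℝ)| := by rw [Real.dist_eq]
        _ ≤ ((K:ℝ)+1) * (ε / (2*((K:ℝ)+1))) := by
            apply mul_le_mul (by linarith) hq.le (abs_nonneg _) (by positivity)
        _ = ε / 2 := by field_simp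
    have h2 : fq q v - fq q u ≤ ∫ t in Icc u v, m t := by
      rw [← lip_integral_deriv_eq (hfqlip q) huv]
      exact integral_mono (dq_int q u v) (m_int u v)
        (fun t => (le_abs_self _).trans (m_ge q t))
    have t1 := dist_triangle (G u) (G (q:ℝ)) (G v)
    have t2 : dist (G (q:ℝ)) (G v) = fq q v := dist_comm _ _
    have t3 : dist (G u) (G (q:ℝ)) = fq q u := rfl
    linarith
  have m_ii : ∀ u v : ℝ, IntervalIntegrable m volume u v := by
    intro u v
    apply IntegrableOn.intervalIntegrable
    rcases le_total u v with h | h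
    · rw [uIcc_of_le h]; exact m_int u v
    · rw [uIcc_of_ge h]; exact m_int v u
  set H : ℝ → ℝ := fun t => ∫ s in (0:ℝ)..t, m s with hHdef
  have Hincr : ∀ u v : ℝ, u ≤ v → H v - H u = ∫ s in Icc u v, m s := by
    intro u v huv
    have h1 : H u + ∫ s in u..v, m s = H v :=
      intervalIntegral.integral_add_adjacent_intervals (m_ii 0 u) (m_ii u v)
    rw [← h1, intervalIntegral.integral_of_le huv, ← integral_Icc_eq_integral_Ioc]
    ring
  have Hmono : Monotone H := by
    intro u v huv
    have h0 : 0 ≤ ∫ s in Icc u v, m s :=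
      setIntegral_nonneg measurableSet_Icc (fun t _ => m_nonneg t)
    have := Hincr u v huv; linarith
  have KEY2 : ∀ u v : ℝ, u ≤ v → V v - V u ≤ H v - H u := by
    intro u v huv
    rw [V1 u v huv, hvar u v]
    have hGH : eVariationOn G (Icc u v) ≤ ENNReal.ofReal (H v - H u) := by
      apply iSup_le
      rintro ⟨n, ⟨uu, huu, uus⟩⟩
      have step : ∀ i : ℕ, edist (G (uu (i+1))) (G (uu i))
          ≤ ENNReal.ofReal (H (uu (i+1)) - H (uu i)) := by
        intro i
        rw [edist_dist]
        apply ENNReal.ofReal_le_ofReal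
        have h4 := KEY1 (uu i) (uu (i+1)) (huu (Nat.le_succ i))
        rw [← Hincr _ _ (huu (Nat.le_succ i))] at h4
        rwa [dist_comm]
      calc ∑ i ∈ Finset.range n, edist (G (uu (i+1))) (G (uu i))
          ≤ ∑ i ∈ Finset.range n, ENNReal.ofReal (H (uu (i+1)) - H (uu i)) :=
            Finset.sum_le_sum (fun i _ => step i)
        _ = ENNReal.ofReal (∑ i ∈ Finset.range n, (H (uu (i+1)) - H (uu i))) := by
            rw [ENNReal.ofReal_sum_of_nonneg]
            intro i _
            have := Hmono (huu (Nat.le_succ i)); linarith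
        _ = ENNReal.ofReal (H (uu n) - H (uu 0)) := by
            rw [Finset.sum_range_sub (fun i => H (uu i))]
        _ ≤ ENNReal.ofReal (H v - H u) := by
            apply ENNReal.ofReal_le_ofReal
            have h5 := Hmono (uus n).2
            have h6 := Hmono (uus 0).1
            linarith
    have := ENNReal.toReal_mono ENNReal.ofReal_ne_top hGH
    rwa [ENNReal.toReal_ofReal (sub_nonneg.2 (Hmono huv))] at this
  -- helper: tendsto of absolute difference quotients
  have slope_tendsto : ∀ (f : ℝ → ℝ) (t : ℝ), DifferentiableAt ℝ f t →
      Tendsto (fun s => |f s - f t| / |s - t|) (𝓝[≠] t) (𝓝 |deriv f t|) := by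
    intro f t hf
    have h1 : Tendsto (slope f t) (𝓝[≠] t) (𝓝 (deriv f t)) :=
      hasDerivAt_iff_tendsto_slope.1 hf.hasDerivAt
    apply h1.abs.congr'
    filter_upwards [self_mem_nhdsWithin] with s _
    rw [slope_def_field, abs_div]
  have m_locint : LocallyIntegrable m volume := by
    intro x
    exact ⟨Icc (x-1) (x+1), Icc_mem_nhds (by linarith) (by linarith), m_int _ _⟩
  have hleb := IsUnifLocDoublingMeasure.ae_tendsto_average (μ := (volume : Measure ℝ)) m_locint 1
  filter_upwards [hVlip.ae_differentiableAt_real,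
    ae_all_iff.2 (fun q : ℚ => (hfqlip q).ae_differentiableAt_real), hleb]
    with t hVd hqd hav
  set L := deriv V t with hLdef
  have hslopeV : Tendsto (slope V t) (𝓝[≠] t) (𝓝 L) :=
    hasDerivAt_iff_tendsto_slope.1 hVd.hasDerivAt
  have hL0 : 0 ≤ L := by
    apply ge_of_tendsto hslopeV
    filter_upwards [self_mem_nhdsWithin] with s hs
    rw [slope_def_field]
    rcases lt_or_gt_of_ne (hs : s ≠ t) with h | h
    · exact div_nonneg_iff.2 (Or.inr ⟨by linarith [Vmono h.le], by linarith⟩)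
    · exact div_nonneg_iff.2 (Or.inl ⟨by linarith [Vmono h.le], by linarith⟩)
  have hu : Tendsto (fun s => |V s - V t| / |s - t|) (𝓝[≠] t) (𝓝 L) := by
    have h := slope_tendsto V t hVd
    rwa [abs_of_nonneg hL0] at h
  set QA : ℝ → ℝ := fun s => dist (c s) (c t) / |s - t| with hQAdef
  set QB : ℝ → ℝ := fun s => dist (G s) (G t) / |s - t| with hQBdef
  have hdivmono : ∀ {a b e : ℝ}, a ≤ b → (0:ℝ) < e → a / e ≤ b / e := by
    intro a b e hab he
    gcongr
  have hQA_nonneg : ∀ s, 0 ≤ QA s := fun s => div_nonneg dist_nonneg (abs_nonneg _)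
  have hQB_nonneg : ∀ s, 0 ≤ QB s := fun s => div_nonneg dist_nonneg (abs_nonneg _)
  have hQBA : ∀ s, QB s ≤ QA s := by
    intro s
    rcases eq_or_lt_of_le (abs_nonneg (s - t)) with h | h
    · simp only [hQAdef, hQBdef, ← h, div_zero, le_refl]
    · exact hdivmono (hGc s t) h
  have hQA_leK : ∀ᶠ s in 𝓝[≠] t, QA s ≤ K := by
    filter_upwards [self_mem_nhdsWithin] with s hs
    have h : (0:ℝ) < |s - t| := by
      rw [abs_pos, sub_ne_zero]; exact hs
    rw [hQAdef, div_le_iff₀ h]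
    have := hc.dist_le_mul s t
    rwa [Real.dist_eq] at this
  have hQB_leK : ∀ᶠ s in 𝓝[≠] t, QB s ≤ K := by
    filter_upwards [hQA_leK] with s hs
    exact (hQBA s).trans hs
  have hbddA_le : IsBoundedUnder (· ≤ ·) (𝓝[≠] t) QA := ⟨(K:ℝ), eventually_map.2 hQA_leK⟩
  have hbddB_le : IsBoundedUnder (· ≤ ·) (𝓝[≠] t) QB := ⟨(K:ℝ), eventually_map.2 hQB_leK⟩
  have hbddA_ge : IsBoundedUnder (· ≥ ·) (𝓝[≠] t) QA :=
    ⟨0, eventually_map.2 (Eventually.of_forall hQA_nonneg)⟩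
  have hbddB_ge : IsBoundedUnder (· ≥ ·) (𝓝[≠] t) QB :=
    ⟨0, eventually_map.2 (Eventually.of_forall hQB_nonneg)⟩
  have hQA_le_u : ∀ᶠ s in 𝓝[≠] t, QA s ≤ |V s - V t| / |s - t| := by
    filter_upwards with s
    rcases eq_or_lt_of_le (abs_nonneg (s - t)) with h | h
    · simp only [hQAdef, ← h, div_zero, le_refl]
    · exact hdivmono (distc_le' s t) h
  have hlimsupA : limsup QA (𝓝[≠] t) ≤ L := by
    have h1 : limsup QA (𝓝[≠] t) ≤ limsup (fun s => |V s - V t| / |s - t|) (𝓝[≠] t) :=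
      limsup_le_limsup hQA_le_u hbddA_ge.isCoboundedUnder_le hu.isBoundedUnder_le
    rwa [hu.limsup_eq] at h1
  have hlimB0 : 0 ≤ liminf QB (𝓝[≠] t) :=
    le_liminf_of_le hbddB_le.isCoboundedUnder_ge (Eventually.of_forall hQB_nonneg)
  have hmt_le : m t ≤ liminf QB (𝓝[≠] t) := by
    have hq : ∀ q : ℚ, |deriv (fq q) t| ≤ liminf QB (𝓝[≠] t) := by
      intro q
      have h2 : Tendsto (fun s => |fq q s - fq q t| / |s - t|) (𝓝[≠] t)
          (𝓝 |deriv (fq q) t|) := slope_tendsto _ t (hqd q)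
      have h3 : ∀ᶠ s in 𝓝[≠] t, |fq q s - fq q t| / |s - t| ≤ QB s := by
        filter_upwards with s
        rcases eq_or_lt_of_le (abs_nonneg (s - t)) with h | h
        · simp only [hQBdef, ← h, div_zero, le_refl]
        · exact hdivmono (abs_dist_sub_le _ _ _) h
      calc |deriv (fq q) t|
          = liminf (fun s => |fq q s - fq q t| / |s - t|) (𝓝[≠] t) := h2.liminf_eq.symm
        _ ≤ liminf QB (𝓝[≠] t) :=
            liminf_le_liminf h3 h2.isBoundedUnder_ge hbddB_le.isCoboundedUnder_ge
    have h4 : mE t ≤ ENNReal.ofReal (liminf QB (𝓝[≠] t)) :=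
      iSup_le fun q => ENNReal.ofReal_le_ofReal (hq q)
    have := ENNReal.toReal_mono ENNReal.ofReal_ne_top h4
    rwa [ENNReal.toReal_ofReal hlimB0] at this
  have havg : Tendsto (fun r => ⨍ y in Metric.closedBall t r, m y) (𝓝[>] (0:ℝ)) (𝓝 (m t)) := by
    apply hav (fun _ => t) id tendsto_id
    filter_upwards [self_mem_nhdsWithin] with r hr
    exact Metric.mem_closedBall_self (by simp only [one_mul]; exact le_of_lt hr)
  have hF : Tendsto (fun r => (V (t + r) - V (t - r)) / (2 * r)) (𝓝[>] (0:ℝ)) (𝓝 L) := by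
    have h1 : Tendsto (fun r : ℝ => t + r) (𝓝[>] 0) (𝓝[≠] t) := by
      apply tendsto_nhdsWithin_of_tendsto_nhds_of_eventually_within
      · have : Tendsto (fun r : ℝ => t + r) (𝓝 0) (𝓝 (t + 0)) :=
          (continuous_const.add continuous_id).tendsto 0
        simpa using this.mono_left nhdsWithin_le_nhds
      · filter_upwards [self_mem_nhdsWithin] with r hr
        simp only [mem_compl_iff, mem_singleton_iff]
        intro h
        have : r = 0 := by linarith [h]
        exact absurd this (ne_of_gt hr)
    have h2 : Tendsto (fun r : ℝ => t - r) (𝓝[>] 0) (𝓝[≠] t) := by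
      apply tendsto_nhdsWithin_of_tendsto_nhds_of_eventually_within
      · have : Tendsto (fun r : ℝ => t - r) (𝓝 0) (𝓝 (t - 0)) :=
          (continuous_const.sub continuous_id).tendsto 0
        simpa using this.mono_left nhdsWithin_le_nhds
      · filter_upwards [self_mem_nhdsWithin] with r hr
        simp only [mem_compl_iff, mem_singleton_iff]
        intro h
        have : r = 0 := by linarith [h]
        exact absurd this (ne_of_gt hr)
    have h3 := ((hslopeV.comp h1).add (hslopeV.comp h2)).div_const 2
    have h4 : (L + L) / 2 = L := by ring
    rw [h4] at h3
    apply h3.congr'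
    filter_upwards [self_mem_nhdsWithin] with r hr
    have hr0 : r ≠ 0 := ne_of_gt hr
    simp only [Function.comp_apply, slope_def_field]
    have e1 : t + r - t = r := by ring
    have e2 : t - r - t = -r := by ring
    rw [e1, e2]
    field_simp [hr0]
    ring
  have hFle : ∀ᶠ r in 𝓝[>] (0:ℝ), (V (t + r) - V (t - r)) / (2 * r)
      ≤ ⨍ y in Metric.closedBall t r, m y := by
    filter_upwards [self_mem_nhdsWithin] with r hr
    have hr0 : (0:ℝ) < r := hr
    have h5 : V (t + r) - V (t - r) ≤ ∫ s in Icc (t - r) (t + r), m s := by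
      have ha := KEY2 (t - r) (t + r) (by linarith)
      have hb := Hincr (t - r) (t + r) (by linarith)
      linarith
    rw [Real.closedBall_eq_Icc, setAverage_eq, measureReal_def, Real.volume_Icc, smul_eq_mul]
    have h7 : ENNReal.ofReal (t + r - (t - r)) = ENNReal.ofReal (2*r) := by congr 1; ring
    rw [h7, ENNReal.toReal_ofReal (by linarith)]
    rw [div_eq_inv_mul]
    exact mul_le_mul_of_nonneg_left h5 (by positivity)
  have hLm : L ≤ m t := le_of_tendsto_of_tendsto hF havg hFle
  have hliminfB : L ≤ liminf QB (𝓝[≠] t) := hLm.trans hmt_le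
  have hliminfA : L ≤ liminf QA (𝓝[≠] t) :=
    hliminfB.trans (liminf_le_liminf (Eventually.of_forall hQBA)
      hbddB_ge hbddA_le.isCoboundedUnder_ge)
  have hlimsupB : limsup QB (𝓝[≠] t) ≤ L :=
    le_trans (limsup_le_limsup (Eventually.of_forall hQBA)
      hbddB_ge.isCoboundedUnder_le hbddA_le) hlimsupA
  exact ⟨L, tendsto_of_le_liminf_of_limsup_le hliminfA hlimsupA hbddA_le hbddA_ge,
    tendsto_of_le_liminf_of_limsup_le hliminfB hlimsupB hbddB_le hbddB_ge⟩

open Topology in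
private lemma proj_lip (a b u v : ℝ) : |max a (min u b) - max a (min v b)| ≤ |u - v| := by
  have h1 := abs_max_sub_max_le_max a (min u b) a (min v b)
  have h2 := abs_min_sub_min_le_max u b v b
  simp only [sub_self, abs_zero] at h1 h2
  calc |max a (min u b) - max a (min v b)| ≤ max 0 |min u b - min v b| := h1
    _ = |min u b - min v b| := max_eq_right (abs_nonneg _)
    _ ≤ max |u - v| 0 := h2
    _ = |u - v| := max_eq_left (abs_nonneg _)

/-- Let `X` carry two complete metrics `d_A`, `d_B` with `d_B ≤ d_A`, such that every
`d_A`-Lipschitz curve has equal variations with respect to the two metrics. Then for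
every `d_A`-Lipschitz curve `c : [a,b] → X` and a.e. `t ∈ (a,b)`, the metric
derivatives of `c` at `t` with respect to `d_A` and `d_B` both exist and coincide. -/
theorem metric_derivatives_coincide {X : Type*} (mA mB : MetricSpace X)
    (hle : ∀ x y : X, mB.dist x y ≤ mA.dist x y)
    (hcompA : @CompleteSpace X mA.toUniformSpace)
    (hcompB : @CompleteSpace X mB.toUniformSpace)
    (hvar : ∀ (s t : ℝ) (f : ℝ → X),
      (∃ K : ℝ, ∀ u ∈ Set.Icc s t, ∀ v ∈ Set.Icc s t,
        mA.dist (f u) (f v) ≤ K * |u - v|) →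
      eVarWith mA.dist f (Set.Icc s t) = eVarWith mB.dist f (Set.Icc s t))
    (a b : ℝ) (c : ℝ → X)
    (hc : ∃ K : ℝ, ∀ u ∈ Set.Icc a b, ∀ v ∈ Set.Icc a b,
      mA.dist (c u) (c v) ≤ K * |u - v|) :
    ∀ᵐ t ∂(volume.restrict (Set.Ioo a b)), ∃ L : ℝ,
      Filter.Tendsto (fun s : ℝ => mA.dist (c s) (c t) / |s - t|)
        (nhdsWithin t (Set.Icc a b \ {t})) (nhds L) ∧
      Filter.Tendsto (fun s : ℝ => mB.dist (c s) (c t) / |s - t|)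
        (nhdsWithin t (Set.Icc a b \ {t})) (nhds L) := by
  rcases le_or_gt b a with hba | hab
  · rw [Set.Ioo_eq_empty (not_lt.2 hba), Measure.restrict_empty]
    simp
  letI : MetricSpace X := mA
  obtain ⟨K₀, hK₀⟩ := hc
  set K : ℝ := |K₀| + 1 with hKdef
  have hKpos : 0 < K := by positivity
  set proj : ℝ → ℝ := fun t => max a (min t b) with hprojdef
  have hmem : ∀ t, proj t ∈ Set.Icc a b := fun t =>
    ⟨le_max_left _ _, max_le hab.le (min_le_right _ _)⟩
  set ct : ℝ → X := fun t => c (proj t) with hctdef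
  have hct : ∀ u v : ℝ, mA.dist (ct u) (ct v) ≤ K * |u - v| := by
    intro u v
    have hpl := proj_lip a b u v
    have h0 : mA.dist (ct u) (ct v) ≤ K₀ * |proj u - proj v| :=
      hK₀ _ (hmem u) _ (hmem v)
    have h1 : K₀ ≤ K := by
      have := le_abs_self K₀; linarith
    have h2 : (0:ℝ) ≤ |proj u - proj v| := abs_nonneg _
    nlinarith [abs_nonneg (u - v)]
  have hctlip : LipschitzWith K.toNNReal ct := by
    apply LipschitzWith.of_dist_le_mul
    intro u v
    rw [Real.dist_eq, Real.coe_toNNReal K hKpos.le]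
    exact hct u v
  have hvar' : ∀ u v : ℝ,
      eVariationOn ct (Set.Icc u v)
        = @eVariationOn ℝ _ X mB.toPseudoEMetricSpace (id ∘ ct) (Set.Icc u v) := by
    intro u v
    have h := hvar u v ct ⟨K, fun x _ y _ => hct x y⟩
    have hA : eVarWith mA.dist ct (Set.Icc u v) = eVariationOn ct (Set.Icc u v) :=
      eVarWith_eq_eVariationOn ct (Set.Icc u v)
    have hB : eVarWith mB.dist ct (Set.Icc u v)
        = @eVariationOn ℝ _ X mB.toPseudoEMetricSpace ct (Set.Icc u v) :=
      @eVarWith_eq_eVariationOn X mB ct (Set.Icc u v)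
    rw [← hA, h, hB]
    rfl
  have hcore := @core X X mA mB id (fun x y => hle x y) ct K.toNNReal hctlip hvar'
  have hae := ae_restrict_of_ae (μ := volume) (s := Set.Ioo a b) hcore
  filter_upwards [hae, ae_restrict_mem measurableSet_Ioo] with t ht htmem
  obtain ⟨L, hA, hB⟩ := ht
  have hproj_t : proj t = t := by
    simp only [hprojdef]
    rw [min_eq_left htmem.2.le, max_eq_right htmem.1.le]
  have hsub : Set.Icc a b \ {t} ⊆ {t}ᶜ := fun s hs => hs.2
  have hmem_eq : ∀ᶠ s in nhdsWithin t (Set.Icc a b \ {t}), proj s = s := by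
    filter_upwards [self_mem_nhdsWithin] with s hs
    simp only [hprojdef]
    rw [min_eq_left hs.1.2, max_eq_right hs.1.1]
  refine ⟨L, ?_, ?_⟩
  · apply Filter.Tendsto.congr' ?_ (hA.mono_left (nhdsWithin_mono t hsub))
    filter_upwards [hmem_eq] with s hs
    show mA.dist (ct s) (ct t) / |s - t| = mA.dist (c s) (c t) / |s - t|
    simp only [hctdef]
    rw [hs, hproj_t]
  · apply Filter.Tendsto.congr' ?_ (hB.mono_left (nhdsWithin_mono t hsub))
    filter_upwards [hmem_eq] with s hs
    show mB.dist (ct s) (ct t) / |s - t| = mB.dist (c s) (c t) / |s - t|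
    simp only [hctdef]
    rw [hs, hproj_t]
end
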